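/- arXiv:1908.00001 — 5 statements merged into one kernel-verified Lean document; each statement's English description precedes it below -/
import Mathlib

section
/- Let a, b be real numbers with a > 0 and b > 0. Then erfc(a) * erfc(b) = (1/π) * exp(-(a² + b²)) * ∫_{0}^{∞} exp(-t) * (a * √(t + a²) + b * √(t + b²)) / ((t + a² + b²) * √((t + a²) * (t + b²))) dt. -/
open MeasureTheory

/-- The error function: erf(z) = (2/√π) ∫_0^z exp(-u²) du. -/
noncomputable def erf (z : ℝ) : ℝ :=
  (2 / Real.sqrt Real.pi) * ∫ u in (0:ℝ)..z, Real.exp (-u ^ 2)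

/-- The complementary error function. -/
noncomputable def erfc (z : ℝ) : ℝ := 1 - erf z

open Real Set Filter Topology



lemma gauss_integrable : Integrable (fun u : ℝ => Real.exp (-u ^ 2)) := by
  simpa using integrable_exp_neg_mul_sq one_pos

lemma integral_gauss_Ioi_zero : ∫ u in Ioi (0:ℝ), Real.exp (-u ^ 2) = Real.sqrt π / 2 := by
  simpa using integral_gaussian_Ioi 1

lemma sqrt_pi_pos : 0 < Real.sqrt π := Real.sqrt_pos.2 pi_pos

lemma erfc_eq {c : ℝ} (hc : 0 ≤ c) :
    erfc c = (2 / Real.sqrt π) * ∫ u in Ioi c, Real.exp (-u ^ 2) := by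
  have hsplit : (∫ u in Ioc (0:ℝ) c, Real.exp (-u ^ 2)) + ∫ u in Ioi c, Real.exp (-u ^ 2)
      = ∫ u in Ioi (0:ℝ), Real.exp (-u ^ 2) := by
    rw [← setIntegral_union (Ioc_disjoint_Ioi le_rfl) measurableSet_Ioi
      gauss_integrable.integrableOn gauss_integrable.integrableOn, Ioc_union_Ioi_eq_Ioi hc]
  have h0 : (∫ u in (0:ℝ)..c, Real.exp (-u ^ 2)) = ∫ u in Ioc (0:ℝ) c, Real.exp (-u ^ 2) :=
    intervalIntegral.integral_of_le hc
  have h1 : (1:ℝ) = 2 / Real.sqrt π * (Real.sqrt π / 2) := by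
    field_simp
  rw [erfc, erf, h0]
  rw [show (∫ u in Ioc (0:ℝ) c, Real.exp (-u ^ 2))
      = Real.sqrt π / 2 - ∫ u in Ioi c, Real.exp (-u ^ 2) by
    rw [← integral_gauss_Ioi_zero, ← hsplit]; ring]
  field_simp
  ring

lemma erfc_nonneg {c : ℝ} (hc : 0 ≤ c) : 0 ≤ erfc c := by
  rw [erfc_eq hc]
  apply mul_nonneg (by positivity)
  exact setIntegral_nonneg measurableSet_Ioi fun u _ => (Real.exp_pos _).le

lemma erfc_le_one {c : ℝ} (hc : 0 ≤ c) : erfc c ≤ 1 := by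
  have : 0 ≤ erf c := by
    apply mul_nonneg (by positivity)
    apply intervalIntegral.integral_nonneg hc
    exact fun u _ => (Real.exp_pos _).le
  simp only [erfc]; linarith

lemma erfc_le_exp {c : ℝ} (hc : 1 ≤ c) : erfc c ≤ 2 / Real.sqrt π * Real.exp (-c) := by
  rw [erfc_eq (by linarith : (0:ℝ) ≤ c)]
  have hint : IntegrableOn (fun u : ℝ => Real.exp (-u)) (Ioi c) := by
    simpa using exp_neg_integrableOn_Ioi c one_pos
  have h1 : (∫ u in Ioi c, Real.exp (-u ^ 2)) ≤ ∫ u in Ioi c, Real.exp (-u) := by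
    apply setIntegral_mono_on gauss_integrable.integrableOn hint measurableSet_Ioi
    intro u hu
    have h2 : 1 ≤ u := le_trans hc (le_of_lt hu)
    exact Real.exp_le_exp.2 (by nlinarith)
  have h2 : (∫ u in Ioi c, Real.exp (-u)) = Real.exp (-c) := integral_exp_neg_Ioi c
  have h3 : (0:ℝ) < 2 / Real.sqrt π := by positivity
  calc 2 / Real.sqrt π * ∫ u in Ioi c, Real.exp (-u ^ 2)
      ≤ 2 / Real.sqrt π * ∫ u in Ioi c, Real.exp (-u) := by
        exact mul_le_mul_of_nonneg_left h1 h3.le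
    _ = 2 / Real.sqrt π * Real.exp (-c) := by rw [h2]

lemma tendsto_erfc : Tendsto erfc atTop (𝓝 0) := by
  have h1 : Tendsto (fun c : ℝ => 2 / Real.sqrt π * Real.exp (-c)) atTop (𝓝 0) := by
    simpa using (Real.tendsto_exp_neg_atTop_nhds_zero).const_mul (2 / Real.sqrt π)
  apply squeeze_zero' ?_ ?_ h1
  · filter_upwards [eventually_ge_atTop (1:ℝ)] with c hc using erfc_nonneg (by linarith)
  · filter_upwards [eventually_ge_atTop (1:ℝ)] with c hc using erfc_le_exp hc

lemma hasDerivAt_erfc (x : ℝ) :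
    HasDerivAt erfc (-(2 / Real.sqrt π * Real.exp (-x ^ 2))) x := by
  have h : HasDerivAt (fun z => ∫ u in (0:ℝ)..z, Real.exp (-u ^ 2)) (Real.exp (-x ^ 2)) x := by
    exact intervalIntegral.integral_hasDerivAt_right gauss_integrable.intervalIntegrable
      gauss_integrable.aestronglyMeasurable.stronglyMeasurableAtFilter
      (Continuous.continuousAt (by continuity))
  have := ((h.const_mul (2 / Real.sqrt π)).const_sub 1)
  have e : erfc = fun z => 1 - 2 / Real.sqrt π * ∫ u in (0:ℝ)..z, Real.exp (-u ^ 2) := rfl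
  rw [e]
  simpa [mul_comm] using this

lemma hasDerivAt_erfc_sqrt {c r : ℝ} (hc : 0 < c) (hr : 0 < r) :
    HasDerivAt (fun t => erfc (c * Real.sqrt t))
      (-(c / (Real.sqrt π * Real.sqrt r) * Real.exp (-(c ^ 2 * r)))) r := by
  have hs := (Real.hasDerivAt_sqrt hr.ne').const_mul c
  have h2 := (hasDerivAt_erfc (c * Real.sqrt r)).comp r hs
  have hsq : (c * Real.sqrt r) ^ 2 = c ^ 2 * r := by
    rw [mul_pow, Real.sq_sqrt hr.le]
  rw [hsq] at h2
  refine h2.congr_deriv ?_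
  have h3 : Real.sqrt r > 0 := Real.sqrt_pos.2 hr
  field_simp

lemma tendsto_G {a b : ℝ} (ha : 0 < a) (hb : 0 < b) :
    Tendsto (fun r => erfc (a * Real.sqrt r) * erfc (b * Real.sqrt r)) atTop (𝓝 0) := by
  have hsq : Tendsto (fun r : ℝ => Real.sqrt r) atTop atTop := by
    rw [show (fun r : ℝ => Real.sqrt r) = fun r : ℝ => r ^ (1/2 : ℝ) from funext fun r => Real.sqrt_eq_rpow r]
    exact tendsto_rpow_atTop (by norm_num)
  have h1 : Tendsto (fun r : ℝ => erfc (a * Real.sqrt r)) atTop (𝓝 0) :=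
    tendsto_erfc.comp ((tendsto_const_mul_atTop_of_pos ha).2 hsq)
  have h2 : Tendsto (fun r : ℝ => erfc (b * Real.sqrt r)) atTop (𝓝 0) :=
    tendsto_erfc.comp ((tendsto_const_mul_atTop_of_pos hb).2 hsq)
  simpa using h1.mul h2

lemma integral_G {a b : ℝ} (ha : 0 < a) (hb : 0 < b) :
    ∫ r in Ioi (1:ℝ), (1 / (Real.sqrt π * Real.sqrt r)) *
        (a * Real.exp (-(a ^ 2 * r)) * erfc (b * Real.sqrt r)
          + b * Real.exp (-(b ^ 2 * r)) * erfc (a * Real.sqrt r))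
      = erfc a * erfc b := by
  set G : ℝ → ℝ := fun r => erfc (a * Real.sqrt r) * erfc (b * Real.sqrt r) with hG
  set F : ℝ → ℝ := fun r => (1 / (Real.sqrt π * Real.sqrt r)) *
        (a * Real.exp (-(a ^ 2 * r)) * erfc (b * Real.sqrt r)
          + b * Real.exp (-(b ^ 2 * r)) * erfc (a * Real.sqrt r)) with hF
  have hderiv : ∀ r ∈ Ici (1:ℝ), HasDerivAt (fun r => -G r) (F r) r := by
    intro r hr
    have hr0 : (0:ℝ) < r := lt_of_lt_of_le one_pos hr
    have h1 := (hasDerivAt_erfc_sqrt ha hr0).mul (hasDerivAt_erfc_sqrt hb hr0)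
    have := h1.neg
    refine this.congr_deriv ?_
    simp only [hF]
    field_simp
    ring
  have hpos : ∀ r ∈ Ioi (1:ℝ), 0 ≤ F r := by
    intro r hr
    have hr0 : (0:ℝ) < r := lt_trans one_pos hr
    have h1 : 0 ≤ erfc (a * Real.sqrt r) := erfc_nonneg (by positivity)
    have h2 : 0 ≤ erfc (b * Real.sqrt r) := erfc_nonneg (by positivity)
    have h3 : (0:ℝ) < Real.sqrt r := Real.sqrt_pos.2 hr0
    apply mul_nonneg (by positivity)
    positivity
  have hlim : Tendsto (fun r => -G r) atTop (𝓝 0) := by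
    simpa using (tendsto_G ha hb).neg
  have hint : IntegrableOn F (Ioi (1:ℝ)) :=
    integrableOn_Ioi_deriv_of_nonneg (hderiv 1 self_mem_Ici).continuousAt.continuousWithinAt
      (fun r hr => hderiv r (mem_Ici.2 (le_of_lt hr))) hpos hlim
  have := integral_Ioi_of_hasDerivAt_of_tendsto' hderiv hint hlim
  rw [this]
  simp [hG, Real.sqrt_one]

lemma integral_exp_section {k : ℝ} (hk : 0 < k) :
    ∫ r in Ioi (1:ℝ), Real.exp (-(k * r)) = Real.exp (-k) / k := by
  have h := integral_comp_mul_left_Ioi (fun x => Real.exp (-x)) 1 hk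
  simp only [mul_one, smul_eq_mul] at h
  rw [h, integral_exp_neg_Ioi]
  rw [inv_mul_eq_div]

lemma integral_gauss_scaled {r d : ℝ} (hr : 0 < r) (hd : 0 ≤ d) :
    ∫ s in Ioi d, Real.exp (-(r * s ^ 2))
      = (Real.sqrt r)⁻¹ * (Real.sqrt π / 2 * erfc (d * Real.sqrt r)) := by
  have hsr : 0 < Real.sqrt r := Real.sqrt_pos.2 hr
  have h := integral_comp_mul_left_Ioi (fun u => Real.exp (-u ^ 2)) d hsr
  simp only [smul_eq_mul] at h
  have heq : ∀ s : ℝ, Real.exp (-(Real.sqrt r * s) ^ 2) = Real.exp (-(r * s ^ 2)) := by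
    intro s; rw [mul_pow, Real.sq_sqrt hr.le]
  rw [show (∫ s in Ioi d, Real.exp (-(r * s ^ 2)))
      = ∫ s in Ioi d, Real.exp (-(Real.sqrt r * s) ^ 2) by
    exact setIntegral_congr_fun measurableSet_Ioi fun s _ => (heq s).symm] 
  rw [h]
  have := erfc_eq (c := Real.sqrt r * d) (by positivity)
  rw [mul_comm d (Real.sqrt r), this]
  field_simp

lemma fubini_J {c d : ℝ} (hc : 0 < c) (hd : 0 < d) :
    ∫ s in Ioi d, c * Real.exp (-s ^ 2) / (s ^ 2 + c ^ 2)
      = Real.exp (c ^ 2) * ∫ r in Ioi (1:ℝ),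
          c * Real.exp (-(c ^ 2 * r)) *
            ((Real.sqrt r)⁻¹ * (Real.sqrt π / 2 * erfc (d * Real.sqrt r))) := by
  have key : ∀ s : ℝ, (∫ r in Ioi (1:ℝ), c * Real.exp (c ^ 2) * Real.exp (-((s ^ 2 + c ^ 2) * r)))
      = c * Real.exp (-s ^ 2) / (s ^ 2 + c ^ 2) := by
    intro s
    have hk : (0:ℝ) < s ^ 2 + c ^ 2 := by positivity
    rw [integral_const_mul, integral_exp_section hk,
      show -(s ^ 2 + c ^ 2) = -s ^ 2 - c ^ 2 by ring, Real.exp_sub]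
    rw [div_div]
    field_simp
  have hmeas : AEStronglyMeasurable
      (Function.uncurry fun s r : ℝ => c * Real.exp (c ^ 2) * Real.exp (-((s ^ 2 + c ^ 2) * r)))
      ((volume.restrict (Ioi d)).prod (volume.restrict (Ioi (1:ℝ)))) := by
    apply Continuous.aestronglyMeasurable
    apply continuous_const.mul
    apply Real.continuous_exp.comp
    fun_prop
  have hInt : Integrable
      (Function.uncurry fun s r : ℝ => c * Real.exp (c ^ 2) * Real.exp (-((s ^ 2 + c ^ 2) * r)))
      ((volume.restrict (Ioi d)).prod (volume.restrict (Ioi (1:ℝ)))) := by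
    rw [integrable_prod_iff hmeas]
    constructor
    · apply ae_of_all
      intro s
      have hk : (0:ℝ) < s ^ 2 + c ^ 2 := by positivity
      have h3 : (fun r : ℝ => Real.exp (-((s ^ 2 + c ^ 2) * r)))
          = fun r : ℝ => Real.exp (-(s ^ 2 + c ^ 2) * r) := by
        funext r; congr 1; ring
      have h2 : IntegrableOn (fun r : ℝ => Real.exp (-((s ^ 2 + c ^ 2) * r))) (Ioi 1) := by
        rw [h3]; exact exp_neg_integrableOn_Ioi 1 hk
      exact h2.const_mul _
    · have hg : Integrable (fun s => c * Real.exp (-s ^ 2) / (s ^ 2 + c ^ 2))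
          (volume.restrict (Ioi d)) := by
        apply Integrable.mono ((gauss_integrable.const_mul (1/c)).integrableOn
          (s := Ioi d))
        · apply ContinuousOn.aestronglyMeasurable _ measurableSet_Ioi
          apply ContinuousOn.div (by fun_prop) (by fun_prop)
          intro s _; positivity
        apply ae_of_all
        intro s
        rw [Real.norm_eq_abs, Real.norm_eq_abs, abs_of_pos (by positivity),
          abs_of_pos (by positivity)]
        rw [div_le_iff₀ (by positivity)]
        have h1 : c * c ≤ s ^ 2 + c ^ 2 := by nlinarith [sq_nonneg s]
        have h2 : (0:ℝ) < Real.exp (-s ^ 2) := Real.exp_pos _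
        calc c * Real.exp (-s ^ 2) = (1/c * Real.exp (-s^2)) * (c * c) := by field_simp
          _ ≤ (1/c * Real.exp (-s^2)) * (s ^ 2 + c ^ 2) := by
              apply mul_le_mul_of_nonneg_left h1 (by positivity)
      apply hg.congr
      apply ae_of_all
      intro s
      show c * Real.exp (-s ^ 2) / (s ^ 2 + c ^ 2)
          = ∫ r in Ioi (1:ℝ), ‖c * Real.exp (c ^ 2) * Real.exp (-((s ^ 2 + c ^ 2) * r))‖
      rw [← key s]
      apply setIntegral_congr_fun measurableSet_Ioi
      intro r _
      show c * Real.exp (c ^ 2) * Real.exp (-((s ^ 2 + c ^ 2) * r)) = ‖_‖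
      rw [Real.norm_eq_abs, abs_of_pos (by positivity)]
  calc ∫ s in Ioi d, c * Real.exp (-s ^ 2) / (s ^ 2 + c ^ 2)
      = ∫ s in Ioi d, ∫ r in Ioi (1:ℝ),
          c * Real.exp (c ^ 2) * Real.exp (-((s ^ 2 + c ^ 2) * r)) := by
        apply setIntegral_congr_fun measurableSet_Ioi
        intro s _
        exact (key s).symm
    _ = ∫ r in Ioi (1:ℝ), ∫ s in Ioi d,
          c * Real.exp (c ^ 2) * Real.exp (-((s ^ 2 + c ^ 2) * r)) :=
        integral_integral_swap hInt
    _ = ∫ r in Ioi (1:ℝ), Real.exp (c ^ 2) * (c * Real.exp (-(c ^ 2 * r)) *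
          ((Real.sqrt r)⁻¹ * (Real.sqrt π / 2 * erfc (d * Real.sqrt r)))) := by
        apply setIntegral_congr_fun measurableSet_Ioi
        intro r hr
        have hr0 : (0:ℝ) < r := lt_trans one_pos hr
        have h1 : ∀ s : ℝ, c * Real.exp (c ^ 2) * Real.exp (-((s ^ 2 + c ^ 2) * r))
            = (c * Real.exp (c ^ 2) * Real.exp (-(c ^ 2 * r))) * Real.exp (-(r * s ^ 2)) := by
          intro s
          have h2 : Real.exp (-((s ^ 2 + c ^ 2) * r))
              = Real.exp (-(c ^ 2 * r)) * Real.exp (-(r * s ^ 2)) := by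
            rw [← Real.exp_add]; congr 1; ring
          rw [h2]; ring
        show (∫ s in Ioi d, c * Real.exp (c ^ 2) * Real.exp (-((s ^ 2 + c ^ 2) * r)))
            = Real.exp (c ^ 2) * (c * Real.exp (-(c ^ 2 * r)) *
              ((Real.sqrt r)⁻¹ * (Real.sqrt π / 2 * erfc (d * Real.sqrt r))))
        rw [show (fun s => c * Real.exp (c ^ 2) * Real.exp (-((s ^ 2 + c ^ 2) * r)))
            = fun s => (c * Real.exp (c ^ 2) * Real.exp (-(c ^ 2 * r))) * Real.exp (-(r * s ^ 2))
            from funext h1]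
        rw [integral_const_mul, integral_gauss_scaled hr0 hd.le]
        ring
    _ = Real.exp (c ^ 2) * ∫ r in Ioi (1:ℝ),
          c * Real.exp (-(c ^ 2 * r)) *
            ((Real.sqrt r)⁻¹ * (Real.sqrt π / 2 * erfc (d * Real.sqrt r))) := by
        rw [integral_const_mul]

lemma J_integrand_integrable {c : ℝ} (hc : 0 < c) :
    Integrable (fun s : ℝ => c * Real.exp (-s ^ 2) / (s ^ 2 + c ^ 2)) := by
  apply Integrable.mono (gauss_integrable.const_mul (1/c))
  · apply Continuous.aestronglyMeasurable
    apply Continuous.div (by fun_prop) (by fun_prop)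
    intro s; positivity
  · apply ae_of_all
    intro s
    rw [Real.norm_eq_abs, Real.norm_eq_abs, abs_of_pos (by positivity),
      abs_of_pos (by positivity), div_le_iff₀ (by positivity)]
    have h1 : c * c ≤ s ^ 2 + c ^ 2 := by nlinarith [sq_nonneg s]
    calc c * Real.exp (-s ^ 2) = (1/c * Real.exp (-s^2)) * (c * c) := by field_simp
      _ ≤ (1/c * Real.exp (-s^2)) * (s ^ 2 + c ^ 2) :=
          mul_le_mul_of_nonneg_left h1 (by positivity)

lemma exp_integrableOn_Ici : IntegrableOn (fun t : ℝ => Real.exp (-t)) (Ici (0:ℝ)) := by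
  rw [integrableOn_Ici_iff_integrableOn_Ioi]
  simpa using exp_neg_integrableOn_Ioi 0 one_pos

lemma piece_integrable {c d : ℝ} (hc : 0 < c) (hd : 0 < d) :
    IntegrableOn (fun t : ℝ => Real.exp (-t) * c / (Real.sqrt (t + d ^ 2) * (t + c ^ 2 + d ^ 2)))
      (Ici (0:ℝ)) := by
  set g : ℝ → ℝ := fun t => Real.exp (-t) * c / (Real.sqrt (t + d ^ 2) * (t + c ^ 2 + d ^ 2))
  have hcont : ContinuousOn g (Ici (0:ℝ)) := by
    apply ContinuousOn.div (by fun_prop)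
    · exact (Real.continuous_sqrt.comp_continuousOn (by fun_prop)).mul (by fun_prop)
    · intro t ht
      have ht0 : (0:ℝ) ≤ t := ht
      have h1 : (0:ℝ) < Real.sqrt (t + d ^ 2) := Real.sqrt_pos.2 (by positivity)
      positivity
  apply Integrable.mono (exp_integrableOn_Ici.const_mul (c / (d * (c ^ 2 + d ^ 2))))
  · exact hcont.aestronglyMeasurable measurableSet_Ici
  · rw [ae_restrict_iff' measurableSet_Ici]
    apply ae_of_all
    intro t ht
    have ht0 : (0:ℝ) ≤ t := ht
    have h1 : d ≤ Real.sqrt (t + d ^ 2) := by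
      have h := Real.sqrt_le_sqrt (show d ^ 2 ≤ t + d ^ 2 by linarith)
      rwa [Real.sqrt_sq hd.le] at h
    have h2 : c ^ 2 + d ^ 2 ≤ t + c ^ 2 + d ^ 2 := by linarith
    have h3 : (0:ℝ) < Real.sqrt (t + d ^ 2) := lt_of_lt_of_le hd h1
    rw [Real.norm_eq_abs, Real.norm_eq_abs, abs_of_pos (by positivity),
      abs_of_pos (by positivity), div_le_iff₀ (by positivity)]
    have key : d * (c ^ 2 + d ^ 2) ≤ Real.sqrt (t + d ^ 2) * (t + c ^ 2 + d ^ 2) := by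
      apply mul_le_mul h1 h2 (by positivity) h3.le
    calc Real.exp (-t) * c = (c / (d * (c ^ 2 + d ^ 2)) * Real.exp (-t)) * (d * (c ^ 2 + d ^ 2)) := by
          field_simp
      _ ≤ (c / (d * (c ^ 2 + d ^ 2)) * Real.exp (-t)) * (Real.sqrt (t + d ^ 2) * (t + c ^ 2 + d ^ 2)) :=
          mul_le_mul_of_nonneg_left key (by positivity)

lemma subst_piece {c d : ℝ} (hc : 0 < c) (hd : 0 < d) :
    ∫ t in Ioi (0:ℝ), Real.exp (-t) * c / (Real.sqrt (t + d ^ 2) * (t + c ^ 2 + d ^ 2))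
      = 2 * Real.exp (d ^ 2) * ∫ s in Ioi d, c * Real.exp (-s ^ 2) / (s ^ 2 + c ^ 2) := by
  set g : ℝ → ℝ := fun t => Real.exp (-t) * c / (Real.sqrt (t + d ^ 2) * (t + c ^ 2 + d ^ 2))
    with hg
  set f : ℝ → ℝ := fun s => s ^ 2 - d ^ 2 with hf
  have himg1 : f '' Ioi d ⊆ Ici (0:ℝ) := by
    rintro _ ⟨s, hs, rfl⟩
    have : d < s := hs
    simp only [hf, mem_Ici]
    nlinarith
  have himg2 : f '' Ici d ⊆ Ici (0:ℝ) := by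
    rintro _ ⟨s, hs, rfl⟩
    have : d ≤ s := hs
    simp only [hf, mem_Ici]
    nlinarith
  have hgcont : ContinuousOn g (Ici (0:ℝ)) := by
    apply ContinuousOn.div (by fun_prop)
    · exact (Real.continuous_sqrt.comp_continuousOn (by fun_prop)).mul (by fun_prop)
    · intro t ht
      have ht0 : (0:ℝ) ≤ t := ht
      have h1 : (0:ℝ) < Real.sqrt (t + d ^ 2) := Real.sqrt_pos.2 (by positivity)
      positivity
  have heq : ∀ s ∈ Ici d, (g ∘ f) s * (2 * s)
      = 2 * Real.exp (d ^ 2) * (c * Real.exp (-s ^ 2) / (s ^ 2 + c ^ 2)) := by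
    intro s hs
    have hds : d ≤ s := hs
    have hs0 : 0 < s := lt_of_lt_of_le hd hds
    have h1 : Real.sqrt (s ^ 2 - d ^ 2 + d ^ 2) = s := by
      rw [show s ^ 2 - d ^ 2 + d ^ 2 = s ^ 2 by ring, Real.sqrt_sq hs0.le]
    have h2 : Real.exp (-(s ^ 2 - d ^ 2)) = Real.exp (d ^ 2) * Real.exp (-s ^ 2) := by
      rw [← Real.exp_add]; congr 1; ring
    simp only [hg, hf, Function.comp_apply, h1, h2]
    have h3 : s ^ 2 - d ^ 2 + c ^ 2 + d ^ 2 = s ^ 2 + c ^ 2 := by ring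
    rw [h3]
    field_simp
  have hsub := integral_comp_mul_deriv_Ioi (f := f) (f' := fun s => 2 * s) (g := g) (a := d)
    (by fun_prop)
    ?_ ?_ (hgcont.mono himg1) ((piece_integrable hc hd).mono_set himg2) ?_
  · have hfd : f d = 0 := by simp [hf]
    rw [hfd] at hsub
    rw [← hsub]
    rw [show (∫ s in Ioi d, (g ∘ f) s * (2 * s))
        = ∫ s in Ioi d, 2 * Real.exp (d ^ 2) * (c * Real.exp (-s ^ 2) / (s ^ 2 + c ^ 2)) from
      setIntegral_congr_fun measurableSet_Ioi fun s hs => heq s (mem_Ici.2 (le_of_lt hs))]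
    rw [integral_const_mul]
  · -- Tendsto f atTop atTop
    apply tendsto_atTop_add_const_right
    exact tendsto_pow_atTop two_ne_zero
  · -- HasDerivWithinAt
    intro x _
    have : HasDerivAt f (2 * x) x := by
      simpa [hf] using (hasDerivAt_pow 2 x).sub_const (d ^ 2)
    exact this.hasDerivWithinAt
  · -- IntegrableOn (g ∘ f) * (2 s) on Ici d
    apply IntegrableOn.congr_fun
      (((J_integrand_integrable hc).const_mul (2 * Real.exp (d ^ 2))).integrableOn (s := Ici d))
    · intro s hs
      exact (heq s hs).symm
    · exact measurableSet_Ici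

lemma alg_helper (A B X Y sp sr : ℝ) (hp : sp ≠ 0) (hr : sr ≠ 0) :
    A * (sr⁻¹ * (sp / 2 * X)) + B * (sr⁻¹ * (sp / 2 * Y))
      = sp * sp / 2 * (1 / (sp * sr) * (A * X + B * Y)) := by
  field_simp

lemma I_integrand_integrable {a b : ℝ} (ha : 0 < a) (hb : 0 < b) :
    IntegrableOn (fun r : ℝ => a * Real.exp (-(a ^ 2 * r)) *
      ((Real.sqrt r)⁻¹ * (Real.sqrt π / 2 * erfc (b * Real.sqrt r)))) (Ioi (1:ℝ)) := by
  have hcerfc : Continuous erfc := by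
    rw [continuous_iff_continuousAt]
    exact fun x => (hasDerivAt_erfc x).continuousAt
  have hbound : IntegrableOn (fun r : ℝ => (a * (Real.sqrt π / 2)) * Real.exp (-(a ^ 2 * r)))
      (Ioi (1:ℝ)) := by
    have h3 : (fun r : ℝ => Real.exp (-(a ^ 2 * r))) = fun r : ℝ => Real.exp (-a ^ 2 * r) := by
      funext r; congr 1; ring
    have h2 : IntegrableOn (fun r : ℝ => Real.exp (-(a ^ 2 * r))) (Ioi 1) := by
      rw [h3]; exact exp_neg_integrableOn_Ioi 1 (by positivity)
    exact h2.const_mul _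
  apply Integrable.mono hbound
  · apply ContinuousOn.aestronglyMeasurable _ measurableSet_Ioi
    apply ContinuousOn.mul (by fun_prop)
    apply ContinuousOn.mul
    · apply ContinuousOn.inv₀ (Real.continuous_sqrt.continuousOn)
      intro r hr
      have : (0:ℝ) < r := lt_trans one_pos hr
      exact (Real.sqrt_pos.2 this).ne'
    · exact (continuous_const.mul (hcerfc.comp (by fun_prop))).continuousOn
  · rw [ae_restrict_iff' measurableSet_Ioi]
    apply ae_of_all
    intro r hr
    have hr1 : (1:ℝ) < r := hr
    have hr0 : (0:ℝ) < r := lt_trans one_pos hr1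
    have hsr : (1:ℝ) ≤ Real.sqrt r := by
      rw [show (1:ℝ) = Real.sqrt 1 by simp]
      exact Real.sqrt_le_sqrt hr1.le
    have hsr0 : (0:ℝ) < Real.sqrt r := lt_of_lt_of_le one_pos hsr
    have he1 : 0 ≤ erfc (b * Real.sqrt r) := erfc_nonneg (by positivity)
    have he2 : erfc (b * Real.sqrt r) ≤ 1 := erfc_le_one (by positivity)
    have hinv : (Real.sqrt r)⁻¹ ≤ 1 := by
      rw [inv_le_one_iff₀]; right; exact hsr
    rw [Real.norm_eq_abs, Real.norm_eq_abs, abs_of_nonneg (by positivity),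
      abs_of_pos (by positivity)]
    calc a * Real.exp (-(a ^ 2 * r)) * ((Real.sqrt r)⁻¹ * (Real.sqrt π / 2 * erfc (b * Real.sqrt r)))
        ≤ a * Real.exp (-(a ^ 2 * r)) * (1 * (Real.sqrt π / 2 * 1)) := by
          apply mul_le_mul_of_nonneg_left _ (by positivity)
          apply mul_le_mul hinv _ (by positivity) one_pos.le
          apply mul_le_mul_of_nonneg_left he2 (by positivity)
      _ = a * (Real.sqrt π / 2) * Real.exp (-(a ^ 2 * r)) := by ring

theorem stmt_3 (a b : ℝ) (ha : 0 < a) (hb : 0 < b) :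
    erfc a * erfc b =
      (1 / Real.pi) * Real.exp (-(a ^ 2 + b ^ 2)) *
        ∫ t in Set.Ioi (0:ℝ),
          Real.exp (-t) *
              (a * Real.sqrt (t + a ^ 2) + b * Real.sqrt (t + b ^ 2)) /
            ((t + a ^ 2 + b ^ 2) * Real.sqrt ((t + a ^ 2) * (t + b ^ 2))) := by
  -- Step 1: split the integrand into two pieces
  have hsplit : ∀ t ∈ Ioi (0:ℝ),
      Real.exp (-t) * (a * Real.sqrt (t + a ^ 2) + b * Real.sqrt (t + b ^ 2)) /
          ((t + a ^ 2 + b ^ 2) * Real.sqrt ((t + a ^ 2) * (t + b ^ 2)))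
        = Real.exp (-t) * a / (Real.sqrt (t + b ^ 2) * (t + a ^ 2 + b ^ 2))
          + Real.exp (-t) * b / (Real.sqrt (t + a ^ 2) * (t + b ^ 2 + a ^ 2)) := by
    intro t ht
    have ht0 : (0:ℝ) < t := ht
    have hu : (0:ℝ) < Real.sqrt (t + a ^ 2) := Real.sqrt_pos.2 (by positivity)
    have hv : (0:ℝ) < Real.sqrt (t + b ^ 2) := Real.sqrt_pos.2 (by positivity)
    have hu2 : Real.sqrt (t + a ^ 2) ^ 2 = t + a ^ 2 := Real.sq_sqrt (by positivity)
    have hv2 : Real.sqrt (t + b ^ 2) ^ 2 = t + b ^ 2 := Real.sq_sqrt (by positivity)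
    rw [Real.sqrt_mul (by positivity)]
    rw [div_add_div _ _ (by positivity) (by positivity), div_eq_div_iff (by positivity) (by positivity)]
    nlinarith [hu2, hv2, mul_pos hu hv, Real.exp_pos (-t), sq_nonneg (Real.sqrt (t+a^2) - Real.sqrt (t+b^2))]
  -- Step 2: the two transformed pieces
  have hP1 : (∫ t in Ioi (0:ℝ), Real.exp (-t) * a / (Real.sqrt (t + b ^ 2) * (t + a ^ 2 + b ^ 2)))
      = 2 * Real.exp (b ^ 2) * (Real.exp (a ^ 2) * ∫ r in Ioi (1:ℝ),
          a * Real.exp (-(a ^ 2 * r)) *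
            ((Real.sqrt r)⁻¹ * (Real.sqrt π / 2 * erfc (b * Real.sqrt r)))) := by
    rw [subst_piece ha hb, fubini_J ha hb]
  have hP2 : (∫ t in Ioi (0:ℝ), Real.exp (-t) * b / (Real.sqrt (t + a ^ 2) * (t + b ^ 2 + a ^ 2)))
      = 2 * Real.exp (a ^ 2) * (Real.exp (b ^ 2) * ∫ r in Ioi (1:ℝ),
          b * Real.exp (-(b ^ 2 * r)) *
            ((Real.sqrt r)⁻¹ * (Real.sqrt π / 2 * erfc (a * Real.sqrt r)))) := by
    rw [subst_piece hb ha, fubini_J hb ha]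
  -- Step 3: the sum of the r-integrals
  have hIsum : (∫ r in Ioi (1:ℝ), a * Real.exp (-(a ^ 2 * r)) *
          ((Real.sqrt r)⁻¹ * (Real.sqrt π / 2 * erfc (b * Real.sqrt r))))
      + (∫ r in Ioi (1:ℝ), b * Real.exp (-(b ^ 2 * r)) *
          ((Real.sqrt r)⁻¹ * (Real.sqrt π / 2 * erfc (a * Real.sqrt r))))
      = π / 2 * (erfc a * erfc b) := by
    rw [← integral_add (I_integrand_integrable ha hb) (I_integrand_integrable hb ha)]
    rw [← integral_G ha hb, ← integral_const_mul]
    apply setIntegral_congr_fun measurableSet_Ioi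
    intro r hr
    have hr0 : (0:ℝ) < r := lt_trans one_pos hr
    have hsr : (0:ℝ) < Real.sqrt r := Real.sqrt_pos.2 hr0
    have hpi : Real.sqrt π * Real.sqrt π = π := Real.mul_self_sqrt pi_pos.le
    show a * Real.exp (-(a ^ 2 * r)) * ((Real.sqrt r)⁻¹ * (Real.sqrt π / 2 * erfc (b * Real.sqrt r)))
        + b * Real.exp (-(b ^ 2 * r)) * ((Real.sqrt r)⁻¹ * (Real.sqrt π / 2 * erfc (a * Real.sqrt r)))
      = π / 2 * (1 / (Real.sqrt π * Real.sqrt r) *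
          (a * Real.exp (-(a ^ 2 * r)) * erfc (b * Real.sqrt r)
            + b * Real.exp (-(b ^ 2 * r)) * erfc (a * Real.sqrt r)))
    rw [show π / 2 * (1 / (Real.sqrt π * Real.sqrt r) *
          (a * Real.exp (-(a ^ 2 * r)) * erfc (b * Real.sqrt r)
            + b * Real.exp (-(b ^ 2 * r)) * erfc (a * Real.sqrt r)))
        = Real.sqrt π * Real.sqrt π / 2 * (1 / (Real.sqrt π * Real.sqrt r) *
          (a * Real.exp (-(a ^ 2 * r)) * erfc (b * Real.sqrt r)
            + b * Real.exp (-(b ^ 2 * r)) * erfc (a * Real.sqrt r))) from by rw [hpi]]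
    exact alg_helper _ _ _ _ _ _ sqrt_pi_pos.ne' hsr.ne'
  -- Step 4: assemble
  have hOint : (∫ t in Ioi (0:ℝ),
        Real.exp (-t) * (a * Real.sqrt (t + a ^ 2) + b * Real.sqrt (t + b ^ 2)) /
          ((t + a ^ 2 + b ^ 2) * Real.sqrt ((t + a ^ 2) * (t + b ^ 2))))
      = (∫ t in Ioi (0:ℝ), Real.exp (-t) * a / (Real.sqrt (t + b ^ 2) * (t + a ^ 2 + b ^ 2)))
        + ∫ t in Ioi (0:ℝ), Real.exp (-t) * b / (Real.sqrt (t + a ^ 2) * (t + b ^ 2 + a ^ 2)) := by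
    rw [setIntegral_congr_fun measurableSet_Ioi hsplit]
    exact integral_add ((piece_integrable ha hb).mono_set Ioi_subset_Ici_self)
      ((piece_integrable hb ha).mono_set Ioi_subset_Ici_self)
  rw [hOint, hP1, hP2]
  set I1 := ∫ r in Ioi (1:ℝ), a * Real.exp (-(a ^ 2 * r)) *
      ((Real.sqrt r)⁻¹ * (Real.sqrt π / 2 * erfc (b * Real.sqrt r))) with hI1
  set I2 := ∫ r in Ioi (1:ℝ), b * Real.exp (-(b ^ 2 * r)) *
      ((Real.sqrt r)⁻¹ * (Real.sqrt π / 2 * erfc (a * Real.sqrt r))) with hI2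
  have hexp : Real.exp (-(a ^ 2 + b ^ 2)) = (Real.exp (a ^ 2) * Real.exp (b ^ 2))⁻¹ := by
    rw [← Real.exp_add, ← Real.exp_neg]
  have harith : 2 * Real.exp (b ^ 2) * (Real.exp (a ^ 2) * I1)
      + 2 * Real.exp (a ^ 2) * (Real.exp (b ^ 2) * I2)
      = 2 * Real.exp (a ^ 2) * Real.exp (b ^ 2) * (I1 + I2) := by ring
  rw [harith, hIsum, hexp]
  have h1 : Real.exp (a ^ 2) ≠ 0 := Real.exp_ne_zero _
  have h2 : Real.exp (b ^ 2) ≠ 0 := Real.exp_ne_zero _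
  have h3 : Real.pi ≠ 0 := Real.pi_ne_zero
  field_simp
end

section
/- Let b be a real number with b > 0. Then erfc(b) = (b/π) * exp(-b²) * ∫_{0}^{∞} exp(-t) / ((t + b²) * √t) dt. -/
open MeasureTheory

open MeasureTheory Real Set Filter

-- tail integral of derivative
lemma aux_tail (c b : ℝ) (hc : 0 < c) :
    ∫ u in Set.Ioi b, 2 * u * Real.exp (-(c * u ^ 2)) = Real.exp (-(c * b ^ 2)) / c := by
  have hint : IntegrableOn (fun u : ℝ => 2 * u * Real.exp (-(c * u ^ 2))) (Set.Ioi b) := by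
    have := (integrable_mul_exp_neg_mul_sq hc).const_mul 2
    simpa [mul_assoc, neg_mul] using this.integrableOn
  have h := integral_Ioi_of_hasDerivAt_of_tendsto
      (f := fun u : ℝ => -Real.exp (-(c * u ^ 2)) / c)
      (f' := fun u : ℝ => 2 * u * Real.exp (-(c * u ^ 2))) (a := b) (m := 0)
      ?_ ?_ hint ?_
  · rw [h]; ring
  · exact (Continuous.continuousWithinAt (by continuity))
  · intro x _
    have h1 : HasDerivAt (fun u : ℝ => -(c * u ^ 2)) (-(c * (2 * x))) x := by
      simpa using ((hasDerivAt_pow 2 x).const_mul c).fun_neg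
    have := (h1.exp).neg.div_const c
    exact this.congr_deriv (by rw [div_eq_iff hc.ne']; ring)
  · have h1 : Tendsto (fun u : ℝ => -(c * u ^ 2)) atTop atBot := by
      apply tendsto_neg_atBot_iff.mpr
      exact (tendsto_pow_atTop (by norm_num)).const_mul_atTop hc
    have := (Real.tendsto_exp_atBot.comp h1).neg.div_const c
    simpa using this

lemma aux_gauss (u : ℝ) (hu : 0 < u) :
    ∫ x in Set.Ioi (0:ℝ), Real.exp (-(u ^ 2 * x ^ 2)) = Real.sqrt Real.pi / (2 * u) := by
  have h := integral_gaussian_Ioi (u ^ 2)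
  simp only [neg_mul] at h ⊢
  rw [h, Real.sqrt_div pi_nonneg, Real.sqrt_sq hu.le]
  ring


lemma aux_int_sec (c : ℝ) (hc : 0 < c) :
    IntegrableOn (fun u : ℝ => 2 * u * Real.exp (-(c * u ^ 2))) (Set.Ioi b) := by
  have := (integrable_mul_exp_neg_mul_sq hc).const_mul 2
  simpa [mul_assoc, neg_mul] using this.integrableOn

lemma aux_norm (b : ℝ) (hb : 0 < b) (x : ℝ) :
    (∫ u in Set.Ioi b, ‖2 * u * Real.exp (-((1 + x ^ 2) * u ^ 2))‖)
      = Real.exp (-((1 + x ^ 2) * b ^ 2)) / (1 + x ^ 2) := by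
  have h1 : (0:ℝ) < 1 + x ^ 2 := by positivity
  rw [← aux_tail (1 + x ^ 2) b h1]
  apply setIntegral_congr_fun measurableSet_Ioi
  intro u hu
  have hu0 : 0 < u := hb.trans hu
  simp only [Real.norm_eq_abs]
  exact abs_of_nonneg (by positivity)

set_option maxHeartbeats 1000000 in
lemma aux_swap (b : ℝ) (hb : 0 < b) :
    ∫ x in Set.Ioi (0:ℝ), ∫ u in Set.Ioi b, 2 * u * Real.exp (-((1 + x ^ 2) * u ^ 2))
      = ∫ u in Set.Ioi b, ∫ x in Set.Ioi (0:ℝ), 2 * u * Real.exp (-((1 + x ^ 2) * u ^ 2)) := by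
  apply MeasureTheory.integral_integral_swap
    (f := fun x u => 2 * u * Real.exp (-((1 + x ^ 2) * u ^ 2)))
  have hm : AEStronglyMeasurable
      (Function.uncurry fun x u => 2 * u * Real.exp (-((1 + x ^ 2) * u ^ 2)))
      ((volume.restrict (Set.Ioi (0:ℝ))).prod (volume.restrict (Set.Ioi b))) := by
    apply Continuous.aestronglyMeasurable
    apply Continuous.mul
    · exact continuous_const.mul continuous_snd
    · apply Real.continuous_exp.comp
      exact (((continuous_const.add (continuous_fst.pow 2)).mul (continuous_snd.pow 2))).neg
  refine (MeasureTheory.integrable_prod_iff hm).mpr ⟨?_, ?_⟩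
  · refine Filter.Eventually.of_forall fun x => ?_
    have hx : (0:ℝ) < 1 + x ^ 2 := by positivity
    exact aux_int_sec (b := b) (1 + x ^ 2) hx
  · have hEq : ∀ x : ℝ, (∫ u in Set.Ioi b, ‖2 * u * Real.exp (-((1 + x ^ 2) * u ^ 2))‖)
        = Real.exp (-((1 + x ^ 2) * b ^ 2)) / (1 + x ^ 2) := fun x => aux_norm b hb x
    have hint : Integrable (fun x : ℝ => Real.exp (-((1 + x ^ 2) * b ^ 2)) / (1 + x ^ 2))
        (volume.restrict (Set.Ioi (0:ℝ))) := by
      have hb2 : (0:ℝ) < b ^ 2 := by positivity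
      have hg : Integrable (fun x : ℝ => Real.exp (-b ^ 2) * Real.exp (-(b ^ 2) * x ^ 2))
          (volume.restrict (Set.Ioi (0:ℝ))) :=
        ((integrable_exp_neg_mul_sq hb2).const_mul _).integrableOn
      refine hg.mono' ?_ ?_
      · apply Continuous.aestronglyMeasurable
        have h1 : ∀ x : ℝ, (1 : ℝ) + x ^ 2 ≠ 0 := fun x => by positivity
        exact Continuous.div (by continuity) (by continuity) h1
      · refine Filter.Eventually.of_forall fun x => ?_
        have h1 : (0:ℝ) < 1 + x ^ 2 := by positivity
        rw [Real.norm_eq_abs, abs_of_nonneg (by positivity)]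
        rw [← Real.exp_add]
        have h2 : -((1 + x ^ 2) * b ^ 2) = -b ^ 2 + -b ^ 2 * x ^ 2 := by ring
        rw [h2]
        calc Real.exp (-b ^ 2 + -b ^ 2 * x ^ 2) / (1 + x ^ 2)
            ≤ Real.exp (-b ^ 2 + -b ^ 2 * x ^ 2) / 1 := by
              apply div_le_div_of_nonneg_left (Real.exp_pos _).le one_pos
              simp; positivity
          _ = Real.exp (-b ^ 2 + -b ^ 2 * x ^ 2) := by ring
    exact hint.congr (Filter.EventuallyEq.symm (Filter.Eventually.of_forall hEq))

lemma aux_inner (u : ℝ) (hu : 0 < u) :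
    ∫ x in Set.Ioi (0:ℝ), 2 * u * Real.exp (-((1 + x ^ 2) * u ^ 2))
      = Real.sqrt Real.pi * Real.exp (-u ^ 2) := by
  have h1 : ∀ x : ℝ, 2 * u * Real.exp (-((1 + x ^ 2) * u ^ 2))
      = (2 * u * Real.exp (-u ^ 2)) * Real.exp (-(u ^ 2 * x ^ 2)) := by
    intro x
    rw [show -((1 + x ^ 2) * u ^ 2) = -u ^ 2 + -(u ^ 2 * x ^ 2) by ring, Real.exp_add]
    ring
  simp_rw [h1]
  rw [MeasureTheory.integral_const_mul, aux_gauss u hu]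
  field_simp

lemma aux_erfc (b : ℝ) (hb : 0 < b) :
    erfc b = (2 / Real.sqrt Real.pi) * ∫ u in Set.Ioi b, Real.exp (-u ^ 2) := by
  have hI : Integrable (fun u : ℝ => Real.exp (-u ^ 2)) := by
    simpa using integrable_exp_neg_mul_sq one_pos
  have hsplit : (∫ u in Set.Ioi (0:ℝ), Real.exp (-u ^ 2))
      = (∫ u in Set.Ioc (0:ℝ) b, Real.exp (-u ^ 2)) + ∫ u in Set.Ioi b, Real.exp (-u ^ 2) := by
    rw [← MeasureTheory.setIntegral_union (Set.Ioc_disjoint_Ioi le_rfl) measurableSet_Ioi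
      hI.integrableOn hI.integrableOn, Set.Ioc_union_Ioi_eq_Ioi hb.le]
  have hg : (∫ u in Set.Ioi (0:ℝ), Real.exp (-u ^ 2)) = Real.sqrt Real.pi / 2 := by
    have := integral_gaussian_Ioi 1
    simpa using this
  have hiv : (∫ u in (0:ℝ)..b, Real.exp (-u ^ 2))
      = ∫ u in Set.Ioc (0:ℝ) b, Real.exp (-u ^ 2) := intervalIntegral.integral_of_le hb.le
  have hπ : Real.sqrt Real.pi ≠ 0 := by positivity
  rw [erfc, erf, hiv]
  have hIoc : (∫ u in Set.Ioc (0:ℝ) b, Real.exp (-u ^ 2))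
      = Real.sqrt Real.pi / 2 - ∫ u in Set.Ioi b, Real.exp (-u ^ 2) := by
    rw [← hg, hsplit]; ring
  rw [hIoc]
  field_simp
  ring

lemma aux_cov (b : ℝ) (hb : 0 < b) :
    (∫ t in Set.Ioi (0:ℝ), Real.exp (-t) / ((t + b ^ 2) * Real.sqrt t))
      = ∫ x in Set.Ioi (0:ℝ), (2 / b) * (Real.exp (-(b ^ 2 * x ^ 2)) / (1 + x ^ 2)) := by
  have himg : (fun x : ℝ => b ^ 2 * x ^ 2) '' Set.Ioi 0 = Set.Ioi (0:ℝ) := by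
    ext t
    constructor
    · rintro ⟨x, hx, rfl⟩
      have hx0 : (0:ℝ) < x := hx
      exact Set.mem_Ioi.mpr (by positivity)
    · intro ht
      have ht0 : (0:ℝ) < t := ht
      refine ⟨Real.sqrt t / b, Set.mem_Ioi.mpr (by positivity), ?_⟩
      show b ^ 2 * (Real.sqrt t / b) ^ 2 = t
      rw [div_pow, Real.sq_sqrt (le_of_lt ht0)]
      field_simp
  have hderiv : ∀ x ∈ Set.Ioi (0:ℝ), HasDerivWithinAt (fun x : ℝ => b ^ 2 * x ^ 2)
      (b ^ 2 * (2 * x)) (Set.Ioi 0) x := by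
    intro x _
    exact (((hasDerivAt_pow 2 x).const_mul (b ^ 2)).hasDerivWithinAt).congr_deriv (by ring)
  have hinj : Set.InjOn (fun x : ℝ => b ^ 2 * x ^ 2) (Set.Ioi 0) := by
    intro x hx y hy h
    have hx0 : (0:ℝ) < x := hx
    have hy0 : (0:ℝ) < y := hy
    have h2 : x ^ 2 = y ^ 2 := mul_left_cancel₀ (by positivity : (b:ℝ) ^ 2 ≠ 0) h
    calc x = Real.sqrt (x ^ 2) := (Real.sqrt_sq hx0.le).symm
      _ = Real.sqrt (y ^ 2) := by rw [h2]
      _ = y := Real.sqrt_sq hy0.le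
  have := MeasureTheory.integral_image_eq_integral_abs_deriv_smul measurableSet_Ioi hderiv hinj
    (fun t => Real.exp (-t) / ((t + b ^ 2) * Real.sqrt t))
  rw [himg] at this
  rw [this]
  apply setIntegral_congr_fun measurableSet_Ioi
  intro x hx
  have hx0 : (0:ℝ) < x := hx
  have hsq : Real.sqrt (b ^ 2 * x ^ 2) = b * x := by
    rw [show b ^ 2 * x ^ 2 = (b * x) ^ 2 by ring, Real.sqrt_sq (by positivity)]
  simp only [smul_eq_mul, hsq, abs_of_nonneg (by positivity : (0:ℝ) ≤ b ^ 2 * (2 * x))]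
  rw [show b ^ 2 * x ^ 2 + b ^ 2 = b ^ 2 * (1 + x ^ 2) by ring]
  field_simp

theorem stmt_4 (b : ℝ) (hb : 0 < b) :
    erfc b =
      (b / Real.pi) * Real.exp (-b ^ 2) *
        ∫ t in Set.Ioi (0:ℝ), Real.exp (-t) / ((t + b ^ 2) * Real.sqrt t) := by
  rw [aux_erfc b hb, aux_cov b hb, MeasureTheory.integral_const_mul]
  set K := ∫ u in Set.Ioi b, Real.exp (-u ^ 2) with hKdef
  set J0 := ∫ x in Set.Ioi (0:ℝ), Real.exp (-(b ^ 2 * x ^ 2)) / (1 + x ^ 2) with hJ0def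
  have hJ : Real.exp (-b ^ 2) * J0
      = ∫ x in Set.Ioi (0:ℝ), Real.exp (-((1 + x ^ 2) * b ^ 2)) / (1 + x ^ 2) := by
    rw [hJ0def, ← MeasureTheory.integral_const_mul]
    apply setIntegral_congr_fun measurableSet_Ioi
    intro x _
    show Real.exp (-b ^ 2) * (Real.exp (-(b ^ 2 * x ^ 2)) / (1 + x ^ 2))
        = Real.exp (-((1 + x ^ 2) * b ^ 2)) / (1 + x ^ 2)
    rw [show -((1 + x ^ 2) * b ^ 2) = -b ^ 2 + -(b ^ 2 * x ^ 2) by ring, Real.exp_add]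
    ring
  have hJ2 : (∫ x in Set.Ioi (0:ℝ), Real.exp (-((1 + x ^ 2) * b ^ 2)) / (1 + x ^ 2))
      = ∫ x in Set.Ioi (0:ℝ), ∫ u in Set.Ioi b, 2 * u * Real.exp (-((1 + x ^ 2) * u ^ 2)) := by
    apply setIntegral_congr_fun measurableSet_Ioi
    intro x _
    show Real.exp (-((1 + x ^ 2) * b ^ 2)) / (1 + x ^ 2)
        = ∫ u in Set.Ioi b, 2 * u * Real.exp (-((1 + x ^ 2) * u ^ 2))
    rw [aux_tail (1 + x ^ 2) b (by positivity)]
  have hJ3 : (∫ u in Set.Ioi b, ∫ x in Set.Ioi (0:ℝ), 2 * u * Real.exp (-((1 + x ^ 2) * u ^ 2)))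
      = Real.sqrt Real.pi * K := by
    rw [hKdef, ← MeasureTheory.integral_const_mul]
    apply setIntegral_congr_fun measurableSet_Ioi
    intro u hu
    exact aux_inner u (hb.trans hu)
  have key : Real.exp (-b ^ 2) * J0 = Real.sqrt Real.pi * K := by
    rw [hJ, hJ2, aux_swap b hb, hJ3]
  have hππ : Real.sqrt Real.pi * Real.sqrt Real.pi = Real.pi := Real.mul_self_sqrt pi_nonneg
  have hsπ : Real.sqrt Real.pi ≠ 0 := by positivity
  have hπ : Real.pi ≠ 0 := pi_ne_zero
  have hb' : b ≠ 0 := hb.ne'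
  calc (2 / Real.sqrt Real.pi) * K
      = (2 / Real.pi) * (Real.sqrt Real.pi * K) := by
        field_simp; linear_combination (-1 : ℝ) * K * hππ
    _ = (2 / Real.pi) * (Real.exp (-b ^ 2) * J0) := by rw [key]
    _ = (b / Real.pi) * Real.exp (-b ^ 2) * ((2 / b) * J0) := by field_simp
end

section
/- Let a, b be real numbers with a > 0 and b > 0. Then 1 − erf(a) * erf(b) = (b/π) * exp(-b²) * ∫_{0}^{∞} exp(-t) * ( 1/((t + b²) * √t) − exp(-a²)/((t + a² + b²) * √(t + a²)) ) dt + (a/π) * exp(-a²) * ∫_{0}^{b²} exp(-t) / ((t + a²) * √t) dt. -/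
open MeasureTheory

open Real Set intervalIntegral

set_option maxHeartbeats 1000000

section Aux


lemma cont_ens : Continuous fun w : ℝ => Real.exp (-w ^ 2) :=
  Real.continuous_exp.comp (continuous_pow 2).neg

noncomputable def E (x : ℝ) : ℝ := ∫ u in (0:ℝ)..x, Real.exp (-u ^ 2)

lemma E_hasDeriv (x : ℝ) : HasDerivAt E (Real.exp (-x ^ 2)) x := by
  have hc : Continuous fun u : ℝ => Real.exp (-u ^ 2) := by continuity
  exact intervalIntegral.integral_hasDerivAt_right
    (hc.intervalIntegrable _ _) (hc.stronglyMeasurableAtFilter _ _) hc.continuousAt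

noncomputable def D (x : ℝ) : ℝ := ∫ t in (0:ℝ)..1, Real.exp (-x ^ 2 * (1 + t ^ 2)) / (1 + t ^ 2)

lemma one_add_sq_pos (t : ℝ) : (0:ℝ) < 1 + t ^ 2 := by positivity

lemma contFaux (x : ℝ) : Continuous fun t : ℝ => Real.exp (-x ^ 2 * (1 + t ^ 2)) / (1 + t ^ 2) :=
  (by continuity : Continuous fun t : ℝ => Real.exp (-x ^ 2 * (1 + t ^ 2))).div
    (by continuity) fun t => (one_add_sq_pos t).ne'

lemma D_hasDeriv (x : ℝ) :
    HasDerivAt D (∫ t in (0:ℝ)..1, -2 * x * Real.exp (-x ^ 2 * (1 + t ^ 2))) x := by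
  have key := intervalIntegral.hasDerivAt_integral_of_dominated_loc_of_deriv_le
    (F := fun x t => Real.exp (-x ^ 2 * (1 + t ^ 2)) / (1 + t ^ 2))
    (F' := fun x t => -2 * x * Real.exp (-x ^ 2 * (1 + t ^ 2)))
    (x₀ := x) (a := 0) (b := 1) (μ := volume)
    (bound := fun _ => 2 * (|x| + 1)) (Metric.ball_mem_nhds x one_pos) ?_ ?_ ?_ ?_ ?_ ?_
  · exact key.2
  · filter_upwards with y
    exact ((contFaux y).aestronglyMeasurable).restrict
  · exact ((contFaux x).intervalIntegrable _ _)
  · exact (Continuous.aestronglyMeasurable (by continuity)).restrict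
  · filter_upwards with t _ y hy
    have h1 : Real.exp (-y ^ 2 * (1 + t ^ 2)) ≤ 1 := by
      apply Real.exp_le_one_iff.mpr; nlinarith [sq_nonneg y, sq_nonneg t]
    have h2 : |y| ≤ |x| + 1 := by
      have := mem_ball_iff_norm.mp hy
      have : |y - x| < 1 := this
      calc |y| = |x + (y - x)| := by ring_nf
        _ ≤ |x| + |y - x| := abs_add_le _ _
        _ ≤ |x| + 1 := by linarith
    have : ‖-2 * y * Real.exp (-y ^ 2 * (1 + t ^ 2))‖
        = 2 * |y| * Real.exp (-y ^ 2 * (1 + t ^ 2)) := by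
      rw [norm_eq_abs, abs_mul, abs_mul, abs_of_nonneg (Real.exp_nonneg _)]
      norm_num
    rw [this]
    nlinarith [Real.exp_nonneg (-y ^ 2 * (1 + t ^ 2)), abs_nonneg y]
  · exact intervalIntegrable_const
  · filter_upwards with t _ y _
    have hc : (0:ℝ) < 1 + t ^ 2 := one_add_sq_pos t
    have h : HasDerivAt (fun y : ℝ => -y ^ 2 * (1 + t ^ 2)) (-2 * y * (1 + t ^ 2)) y := by
      have := ((hasDerivAt_pow 2 y).neg).mul_const (1 + t ^ 2)
      simpa [mul_comm, mul_assoc, mul_left_comm] using this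
    have := (h.exp).div_const (1 + t ^ 2)
    refine this.congr_deriv (Eq.symm ?_)
    field_simp

lemma D_deriv_eq (x : ℝ) :
    (∫ t in (0:ℝ)..1, -2 * x * Real.exp (-x ^ 2 * (1 + t ^ 2)))
      = -2 * Real.exp (-x ^ 2) * E x := by
  have h1 : ∀ t : ℝ, -2 * x * Real.exp (-x ^ 2 * (1 + t ^ 2))
      = (-2 * Real.exp (-x ^ 2)) * (x * Real.exp (-(t * x) ^ 2)) := by
    intro t
    rw [show -x ^ 2 * (1 + t ^ 2) = (-x ^ 2) + (-(t * x) ^ 2) by ring, Real.exp_add]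
    ring
  simp only [h1]
  rw [intervalIntegral.integral_const_mul]
  rcases eq_or_ne x 0 with rfl | hx
  · simp [E]
  · have h2 : (∫ t in (0:ℝ)..1, x * Real.exp (-(t * x) ^ 2)) = E x := by
      rw [intervalIntegral.integral_const_mul,
        intervalIntegral.integral_comp_mul_right (fun w => Real.exp (-w ^ 2)) hx]
      simp [E, smul_eq_mul]
      field_simp
    rw [h2]

lemma classic (x : ℝ) : E x ^ 2 + D x = Real.pi / 4 := by
  have hK : ∀ y : ℝ, HasDerivAt (fun z => E z ^ 2 + D z) 0 y := by
    intro y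
    have h1 : HasDerivAt (fun z => E z ^ 2) (2 * E y * Real.exp (-y ^ 2)) y := by
      have := (E_hasDeriv y).fun_pow 2
      simpa [mul_comm, mul_assoc] using this
    have h2 : HasDerivAt D (-2 * Real.exp (-y ^ 2) * E y) y := by
      have := D_hasDeriv y
      rwa [D_deriv_eq] at this
    have := h1.fun_add h2
    refine this.congr_deriv (Eq.symm ?_)
    ring
  have hconst : (fun z => E z ^ 2 + D z) x = (fun z => E z ^ 2 + D z) 0 := by
    exact is_const_of_deriv_eq_zero (fun y => (hK y).differentiableAt)
      (fun y => (hK y).deriv) x 0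
  simp only at hconst
  rw [hconst]
  have hE0 : E 0 = 0 := by simp [E]
  have hD0 : D 0 = Real.pi / 4 := by
    simp only [D]
    have : ∀ t : ℝ, Real.exp (-(0:ℝ) ^ 2 * (1 + t ^ 2)) / (1 + t ^ 2) = 1 / (1 + t ^ 2) := by
      intro t; norm_num
    rw [intervalIntegral.integral_congr (fun t _ => this t)]
    rw [integral_one_div_one_add_sq]
    simp [Real.arctan_one]
  rw [hE0, hD0]; ring

-- R a = ∫_0^b exp(-w²)/(a²+w²) dw  and its derivative in a (for a > 0)
lemma cont_Rint {c : ℝ} (hc : c ≠ 0) : Continuous fun w : ℝ => Real.exp (-w ^ 2) / (c ^ 2 + w ^ 2) :=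
  (by continuity : Continuous fun w : ℝ => Real.exp (-w ^ 2)).div (by continuity)
    (fun w => by positivity)

lemma R_hasDeriv (b : ℝ) {a : ℝ} (ha : 0 < a) :
    HasDerivAt (fun y => ∫ w in (0:ℝ)..b, Real.exp (-w ^ 2) / (y ^ 2 + w ^ 2))
      (∫ w in (0:ℝ)..b, -2 * a * Real.exp (-w ^ 2) / ((a ^ 2 + w ^ 2) ^ 2)) a := by
  have hball : ∀ y ∈ Metric.ball a (a / 2), a / 2 < y ∧ y < 2 * a := by
    intro y hy
    have := mem_ball_iff_norm.mp hy
    rw [Real.norm_eq_abs, abs_sub_lt_iff] at this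
    constructor <;> linarith
  have key := intervalIntegral.hasDerivAt_integral_of_dominated_loc_of_deriv_le
    (F := fun y w => Real.exp (-w ^ 2) / (y ^ 2 + w ^ 2))
    (F' := fun y w => -2 * y * Real.exp (-w ^ 2) / ((y ^ 2 + w ^ 2) ^ 2))
    (x₀ := a) (a := 0) (b := b) (μ := volume)
    (bound := fun _ => 2 * (2 * a) / (a / 2) ^ 4) (Metric.ball_mem_nhds a (half_pos ha)) ?_ ?_ ?_ ?_ ?_ ?_
  · exact key.2
  · filter_upwards [Metric.ball_mem_nhds a (half_pos ha)] with y hy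
    exact ((cont_Rint (by nlinarith [hball y hy] : y ≠ 0)).aestronglyMeasurable).restrict
  · exact ((cont_Rint ha.ne').intervalIntegrable _ _)
  · refine (Continuous.aestronglyMeasurable ?_).restrict
    exact (by continuity : Continuous fun w : ℝ => -2 * a * Real.exp (-w ^ 2)).div
      (by continuity) (fun w => by positivity)
  · filter_upwards with w _ y hy
    obtain ⟨h1, h2⟩ := hball y hy
    have hy0 : 0 < y := lt_trans (half_pos ha) h1
    have hd : (a / 2) ^ 2 ≤ y ^ 2 + w ^ 2 := by nlinarith [sq_nonneg w]
    have hd4 : (a / 2) ^ 4 ≤ (y ^ 2 + w ^ 2) ^ 2 := by nlinarith [sq_nonneg (a/2), sq_nonneg w, sq_nonneg y]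
    have hexp : Real.exp (-w ^ 2) ≤ 1 := Real.exp_le_one_iff.mpr (by nlinarith [sq_nonneg w])
    rw [Real.norm_eq_abs, abs_div, abs_mul, abs_mul]
    rw [abs_of_nonneg (Real.exp_nonneg _), abs_of_pos (by positivity : (0:ℝ) < (y^2+w^2)^2)]
    rw [abs_of_pos hy0, show |(-2:ℝ)| = 2 by norm_num]
    rw [div_le_div_iff₀ (by positivity) (by positivity)]
    have h24 : (0:ℝ) < (a/2)^4 := by positivity
    have hye : y * Real.exp (-w ^ 2) ≤ 2 * a := by nlinarith [Real.exp_nonneg (-w^2)]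
    nlinarith [mul_le_mul hye hd4 (by positivity) (by positivity : (0:ℝ) ≤ 2*a),
      Real.exp_nonneg (-w^2)]
  · exact intervalIntegrable_const
  · filter_upwards with w _ y hy
    have hy0 : 0 < y := lt_trans (half_pos ha) (hball y hy).1
    have hden : y ^ 2 + w ^ 2 ≠ 0 := by positivity
    have h : HasDerivAt (fun y : ℝ => y ^ 2 + w ^ 2) (2 * y) y := by
      simpa using (hasDerivAt_pow 2 y).add_const (w ^ 2)
    have hder := ((h.fun_inv hden).const_mul (Real.exp (-w ^ 2)))
    have heq : (fun y : ℝ => Real.exp (-w ^ 2) * (y ^ 2 + w ^ 2)⁻¹)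
        = fun y => Real.exp (-w ^ 2) / (y ^ 2 + w ^ 2) := by
      funext z; rw [div_eq_mul_inv]
    rw [heq] at hder
    refine hder.congr_deriv (Eq.symm ?_)
    field_simp

lemma exp_neg_sq_hasDeriv (w : ℝ) :
    HasDerivAt (fun w : ℝ => Real.exp (-w ^ 2)) (-2 * w * Real.exp (-w ^ 2)) w := by
  have := ((hasDerivAt_pow 2 w).fun_neg).exp
  convert this using 1
  simp
  ring

lemma exact_int (b : ℝ) {a : ℝ} (ha : 0 < a) :
    (∫ w in (0:ℝ)..b, (2 * Real.exp (-w ^ 2) + Real.exp (-w ^ 2) / (a ^ 2 + w ^ 2)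
      - 2 * a ^ 2 * (Real.exp (-w ^ 2) / (a ^ 2 + w ^ 2))
      + a * (-2 * a * Real.exp (-w ^ 2) / ((a ^ 2 + w ^ 2) ^ 2))))
    = -(Real.exp (-b ^ 2) * b / (a ^ 2 + b ^ 2)) := by
  have hderiv : ∀ w ∈ Set.uIcc (0:ℝ) b,
      HasDerivAt (fun w => -(Real.exp (-w ^ 2) * w / (a ^ 2 + w ^ 2)))
        (2 * Real.exp (-w ^ 2) + Real.exp (-w ^ 2) / (a ^ 2 + w ^ 2)
          - 2 * a ^ 2 * (Real.exp (-w ^ 2) / (a ^ 2 + w ^ 2))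
          + a * (-2 * a * Real.exp (-w ^ 2) / ((a ^ 2 + w ^ 2) ^ 2))) w := by
    intro w _
    have hne : a ^ 2 + w ^ 2 ≠ 0 := by positivity
    have hnum : HasDerivAt (fun w : ℝ => Real.exp (-w ^ 2) * w)
        (-2 * w * Real.exp (-w ^ 2) * w + Real.exp (-w ^ 2)) w := by
      simpa using (exp_neg_sq_hasDeriv w).fun_mul (hasDerivAt_id w)
    have hden : HasDerivAt (fun w : ℝ => a ^ 2 + w ^ 2) (2 * w) w := by
      simpa using (hasDerivAt_pow 2 w).const_add (a ^ 2)
    have := (hnum.fun_div hden hne).fun_neg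
    refine this.congr_deriv (Eq.symm ?_)
    field_simp
    ring
  have hcont : ContinuousOn (fun w : ℝ => 2 * Real.exp (-w ^ 2) + Real.exp (-w ^ 2) / (a ^ 2 + w ^ 2)
      - 2 * a ^ 2 * (Real.exp (-w ^ 2) / (a ^ 2 + w ^ 2))
      + a * (-2 * a * Real.exp (-w ^ 2) / ((a ^ 2 + w ^ 2) ^ 2))) (Set.uIcc 0 b) := by
    apply Continuous.continuousOn
    have c1 : Continuous fun w : ℝ => Real.exp (-w ^ 2) / (a ^ 2 + w ^ 2) := cont_Rint ha.ne'
    have c2 : Continuous fun w : ℝ => -2 * a * Real.exp (-w ^ 2) / ((a ^ 2 + w ^ 2) ^ 2) :=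
      (by continuity : Continuous fun w : ℝ => -2 * a * Real.exp (-w ^ 2)).div
        (by continuity) (fun w => by positivity)
    continuity
  rw [intervalIntegral.integral_eq_sub_of_hasDerivAt hderiv (hcont.intervalIntegrable)]
  norm_num


noncomputable def W (b x : ℝ) : ℝ :=
  1 - 4 / Real.pi * (E x * E b)
    - 2 / Real.pi * (Real.exp (-b ^ 2) * (∫ w in (0:ℝ)..x, b * Real.exp (-w ^ 2) / (b ^ 2 + w ^ 2))
        + Real.exp (-x ^ 2) * x * (∫ w in (0:ℝ)..b, Real.exp (-w ^ 2) / (x ^ 2 + w ^ 2)))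

lemma W_hasDeriv {b : ℝ} (hb : 0 < b) {a : ℝ} (ha : 0 < a) : HasDerivAt (W b) 0 a := by
  set R'val := ∫ w in (0:ℝ)..b, -2 * a * Real.exp (-w ^ 2) / ((a ^ 2 + w ^ 2) ^ 2) with hR'def
  set Rval := ∫ w in (0:ℝ)..b, Real.exp (-w ^ 2) / (a ^ 2 + w ^ 2) with hRdef
  -- FTC piece
  have hcontP : Continuous fun w : ℝ => b * Real.exp (-w ^ 2) / (b ^ 2 + w ^ 2) :=
    (continuous_const.mul cont_ens).div (continuous_const.add (continuous_pow 2))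
      (fun w => by positivity)
  have hP : HasDerivAt (fun x : ℝ => ∫ w in (0:ℝ)..x, b * Real.exp (-w ^ 2) / (b ^ 2 + w ^ 2))
      (b * Real.exp (-a ^ 2) / (b ^ 2 + a ^ 2)) a :=
    intervalIntegral.integral_hasDerivAt_right (hcontP.intervalIntegrable _ _)
      (hcontP.stronglyMeasurableAtFilter _ _) hcontP.continuousAt
  have hR := R_hasDeriv b ha
  have hprod : HasDerivAt
      (fun x : ℝ => Real.exp (-x ^ 2) * x * (∫ w in (0:ℝ)..b, Real.exp (-w ^ 2) / (x ^ 2 + w ^ 2)))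
      ((-2 * a * Real.exp (-a ^ 2) * a + Real.exp (-a ^ 2)) * Rval
        + Real.exp (-a ^ 2) * a * R'val) a := by
    have h1 : HasDerivAt (fun x : ℝ => Real.exp (-x ^ 2) * x)
        (-2 * a * Real.exp (-a ^ 2) * a + Real.exp (-a ^ 2)) a := by
      simpa using (exp_neg_sq_hasDeriv a).fun_mul (hasDerivAt_id a)
    exact h1.mul hR
  have hE : HasDerivAt (fun x : ℝ => E x * E b) (Real.exp (-a ^ 2) * E b) a :=
    (E_hasDeriv a).mul_const _
  have htot := (((hE.const_mul (4 / Real.pi)).const_sub 1).fun_sub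
    (((hP.const_mul (Real.exp (-b ^ 2))).fun_add hprod).const_mul (2 / Real.pi)))
  have hW : W b = fun x : ℝ =>
      1 - 4 / Real.pi * (E x * E b)
        - 2 / Real.pi * (Real.exp (-b ^ 2) * (∫ w in (0:ℝ)..x, b * Real.exp (-w ^ 2) / (b ^ 2 + w ^ 2))
            + Real.exp (-x ^ 2) * x * (∫ w in (0:ℝ)..b, Real.exp (-w ^ 2) / (x ^ 2 + w ^ 2))) := rfl
  rw [hW]
  refine htot.congr_deriv (Eq.symm ?_)
  -- the key algebraic identity
  have i1 : IntervalIntegrable (fun w : ℝ => Real.exp (-w ^ 2)) volume 0 b :=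
    cont_ens.intervalIntegrable _ _
  have i2 : IntervalIntegrable (fun w : ℝ => Real.exp (-w ^ 2) / (a ^ 2 + w ^ 2)) volume 0 b :=
    (cont_Rint ha.ne').intervalIntegrable _ _
  have i3 : IntervalIntegrable (fun w : ℝ => -2 * a * Real.exp (-w ^ 2) / ((a ^ 2 + w ^ 2) ^ 2)) volume 0 b :=
    ((continuous_const.mul cont_ens).div ((continuous_const.add (continuous_pow 2)).fun_pow 2)
      (fun w => by simp only [Pi.add_apply]; positivity)).intervalIntegrable _ _
  have hsplit : (∫ w in (0:ℝ)..b, (2 * Real.exp (-w ^ 2) + Real.exp (-w ^ 2) / (a ^ 2 + w ^ 2)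
      - 2 * a ^ 2 * (Real.exp (-w ^ 2) / (a ^ 2 + w ^ 2))
      + a * (-2 * a * Real.exp (-w ^ 2) / ((a ^ 2 + w ^ 2) ^ 2))))
      = 2 * E b + Rval - 2 * a ^ 2 * Rval + a * R'val := by
    rw [intervalIntegral.integral_add (((i1.const_mul 2).add i2).sub (i2.const_mul (2 * a ^ 2)))
      (i3.const_mul a)]
    rw [intervalIntegral.integral_sub ((i1.const_mul 2).add i2) (i2.const_mul (2 * a ^ 2))]
    rw [intervalIntegral.integral_add (i1.const_mul 2) i2]
    rw [intervalIntegral.integral_const_mul, intervalIntegral.integral_const_mul,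
      intervalIntegral.integral_const_mul]
    rfl
  have hkey : Rval + a * R'val - 2 * a ^ 2 * Rval + 2 * E b
      = -(Real.exp (-b ^ 2) * b / (a ^ 2 + b ^ 2)) := by
    rw [← exact_int b ha, hsplit]; ring
  linear_combination (2 / Real.pi * Real.exp (-a ^ 2)) * hkey

lemma D_eq {b : ℝ} (hb : 0 < b) :
    D b = Real.exp (-b ^ 2) * b * ∫ w in (0:ℝ)..b, Real.exp (-w ^ 2) / (b ^ 2 + w ^ 2) := by
  have h := intervalIntegral.integral_comp_div (a := 0) (b := b)
    (f := fun t => Real.exp (-b ^ 2 * (1 + t ^ 2)) / (1 + t ^ 2)) hb.ne'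
  rw [zero_div, div_self hb.ne'] at h
  have h2 : ∀ w ∈ Set.uIcc (0:ℝ) b,
      Real.exp (-b ^ 2 * (1 + (w / b) ^ 2)) / (1 + (w / b) ^ 2)
        = (Real.exp (-b ^ 2) * b ^ 2) * (Real.exp (-w ^ 2) / (b ^ 2 + w ^ 2)) := by
    intro w _
    rw [show -b ^ 2 * (1 + (w / b) ^ 2) = -b ^ 2 + -w ^ 2 by field_simp; ring, Real.exp_add]
    rw [show 1 + (w / b) ^ 2 = (b ^ 2 + w ^ 2) / b ^ 2 by field_simp]
    have hbw : b ^ 2 + w ^ 2 ≠ 0 := by positivity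
    field_simp
  rw [intervalIntegral.integral_congr h2, intervalIntegral.integral_const_mul] at h
  have hbd : b * D b = Real.exp (-b ^ 2) * b ^ 2
      * ∫ w in (0:ℝ)..b, Real.exp (-w ^ 2) / (b ^ 2 + w ^ 2) := by
    rw [h, smul_eq_mul]; rfl
  apply mul_left_cancel₀ hb.ne'
  rw [hbd]; ring

lemma W_self {b : ℝ} (hb : 0 < b) : W b b = 0 := by
  have hD := D_eq hb
  have hclassic := classic b
  unfold W
  have hsplit : (∫ w in (0:ℝ)..b, b * Real.exp (-w ^ 2) / (b ^ 2 + w ^ 2))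
      = b * ∫ w in (0:ℝ)..b, Real.exp (-w ^ 2) / (b ^ 2 + w ^ 2) := by
    rw [← intervalIntegral.integral_const_mul]
    apply intervalIntegral.integral_congr
    intro w _
    simp only [mul_div_assoc]
  rw [hsplit]
  have hpi := Real.pi_ne_zero
  field_simp
  linear_combination (-4 : ℝ) * hclassic + 4 * hD

lemma W_const {b : ℝ} (hb : 0 < b) {x y : ℝ} (hx : 0 < x) (hxy : x ≤ y) : W b y = W b x := by
  have hcont : ContinuousOn (W b) (Set.Icc x y) := fun z hz =>
    ((W_hasDeriv hb (lt_of_lt_of_le hx hz.1)).continuousAt).continuousWithinAt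
  have hder : ∀ z ∈ Set.Ico x y, HasDerivWithinAt (W b) 0 (Set.Ici z) z := fun z hz =>
    ((W_hasDeriv hb (lt_of_lt_of_le hx hz.1)).hasDerivWithinAt)
  exact constant_of_has_deriv_right_zero hcont hder y (Set.right_mem_Icc.mpr hxy)

lemma W_zero {b : ℝ} (hb : 0 < b) {a : ℝ} (ha : 0 < a) : W b a = 0 := by
  rcases le_total a b with h | h
  · rw [← W_self hb, W_const hb ha h]
  · rw [← W_self hb, eq_comm, W_const hb hb h]

lemma sq_image_Ioi {c : ℝ} (hc : 0 ≤ c) : (fun w : ℝ => w ^ 2) '' Set.Ioi c = Set.Ioi (c ^ 2) := by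
  ext x
  constructor
  · rintro ⟨w, hw, rfl⟩
    have : 0 ≤ c := hc
    exact pow_lt_pow_left₀ hw hc (by norm_num)
  · intro hx
    have hx0 : 0 ≤ x := le_trans (by positivity) (le_of_lt hx)
    refine ⟨Real.sqrt x, ?_, Real.sq_sqrt hx0⟩
    have : Real.sqrt (c ^ 2) < Real.sqrt x := Real.sqrt_lt_sqrt (by positivity) hx
    rwa [Real.sqrt_sq hc] at this

lemma sq_image_Ioc {c : ℝ} (hc : 0 ≤ c) :
    (fun w : ℝ => w ^ 2) '' Set.Ioc 0 c = Set.Ioc 0 (c ^ 2) := by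
  ext x
  constructor
  · rintro ⟨w, hw, rfl⟩
    exact ⟨pow_pos hw.1 2, pow_le_pow_left₀ (le_of_lt hw.1) hw.2 2⟩
  · intro hx
    have hx0 : 0 ≤ x := le_of_lt hx.1
    refine ⟨Real.sqrt x, ⟨Real.sqrt_pos.mpr hx.1, ?_⟩, Real.sq_sqrt hx0⟩
    have : Real.sqrt x ≤ Real.sqrt (c ^ 2) := Real.sqrt_le_sqrt hx.2
    rwa [Real.sqrt_sq hc] at this

lemma sq_injOn {c : ℝ} (hc : 0 ≤ c) {s : Set ℝ} (hs : s ⊆ Set.Ioi c) :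
    Set.InjOn (fun w : ℝ => w ^ 2) s := by
  intro x hx y hy h
  simp only at h
  have hx0 : 0 ≤ x := le_trans hc (le_of_lt (hs hx))
  have hy0 : 0 ≤ y := le_trans hc (le_of_lt (hs hy))
  have : Real.sqrt (x ^ 2) = Real.sqrt (y ^ 2) := by rw [h]
  rwa [Real.sqrt_sq hx0, Real.sqrt_sq hy0] at this

lemma subst_sq_Ioi {c : ℝ} (hc : 0 ≤ c) (g : ℝ → ℝ) :
    ∫ t in Set.Ioi (c ^ 2), g t = ∫ w in Set.Ioi c, |2 * w| * g (w ^ 2) := by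
  rw [← sq_image_Ioi hc]
  rw [integral_image_eq_integral_abs_deriv_smul measurableSet_Ioi
    (f' := fun w => 2 * w) (fun x _ => (by simpa using hasDerivAt_pow 2 x : HasDerivAt (fun w : ℝ => w ^ 2) (2 * x) x).hasDerivWithinAt)
    (sq_injOn hc (le_refl _)) g]
  simp [smul_eq_mul]

lemma subst_sq_Ioc {c : ℝ} (hc : 0 ≤ c) (g : ℝ → ℝ) :
    ∫ t in Set.Ioc 0 (c ^ 2), g t = ∫ w in Set.Ioc 0 c, |2 * w| * g (w ^ 2) := by
  rw [← sq_image_Ioc hc]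
  rw [integral_image_eq_integral_abs_deriv_smul measurableSet_Ioc
    (f' := fun w => 2 * w) (fun x _ => (by simpa using hasDerivAt_pow 2 x : HasDerivAt (fun w : ℝ => w ^ 2) (2 * x) x).hasDerivWithinAt)
    (sq_injOn (le_refl (0:ℝ)) Set.Ioc_subset_Ioi_self) g]
  simp [smul_eq_mul]

lemma subst_shift {c : ℝ} (hc : 0 ≤ c) (g : ℝ → ℝ) :
    ∫ t in Set.Ioi c, g t = ∫ t in Set.Ioi (0:ℝ), g (t + c) := by
  have himg : (fun t : ℝ => t + c) '' Set.Ioi 0 = Set.Ioi c := by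
    ext x; constructor
    · rintro ⟨t, ht, rfl⟩; simpa using ht
    · intro hx; exact ⟨x - c, by simp [Set.mem_Ioi]; linarith [Set.mem_Ioi.mp hx], by ring⟩
  rw [← himg, integral_image_eq_integral_abs_deriv_smul measurableSet_Ioi
    (f' := fun _ => 1) (fun x _ => (by simpa using (hasDerivAt_id x).add_const c :
      HasDerivAt (fun t : ℝ => t + c) 1 x).hasDerivWithinAt)
    (fun x _ y _ h => by simpa using h) g]
  simp

lemma intA {c : ℝ} (hc : 0 < c) :
    IntegrableOn (fun t : ℝ => Real.exp (-t) * (1 / ((t + c) * Real.sqrt t))) (Set.Ioi 0) := by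
  have hG := (Real.GammaIntegral_convergent (by norm_num : (0:ℝ) < 1/2)).const_mul (1 / c)
  apply Integrable.mono' hG
  · apply ContinuousOn.aestronglyMeasurable _ measurableSet_Ioi
    apply ContinuousOn.mul (Continuous.continuousOn (by continuity))
    apply ContinuousOn.div continuousOn_const
    · exact ContinuousOn.mul (by fun_prop) (Real.continuous_sqrt.continuousOn)
    · intro t ht
      have ht' : (0:ℝ) < t := ht
      have : 0 < Real.sqrt t := Real.sqrt_pos.mpr ht'
      positivity
  · filter_upwards [ae_restrict_mem measurableSet_Ioi] with t ht
    have ht' : (0:ℝ) < t := ht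
    have hst : 0 < Real.sqrt t := Real.sqrt_pos.mpr ht'
    have hrpow : t ^ ((1:ℝ)/2 - 1) = (Real.sqrt t)⁻¹ := by
      rw [show (1:ℝ)/2 - 1 = -(1/2) by norm_num, Real.rpow_neg (le_of_lt ht'),
        ← Real.sqrt_eq_rpow]
    rw [Real.norm_eq_abs, abs_of_nonneg (by positivity)]
    rw [hrpow]
    rw [show (1:ℝ)/c * (Real.exp (-t) * (Real.sqrt t)⁻¹) = Real.exp (-t) * (1 / (c * Real.sqrt t)) by
      field_simp]
    gcongr
    linarith

lemma intB {α β : ℝ} (hα : 0 < α) (hβ : 0 < β) :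
    IntegrableOn (fun t : ℝ =>
      Real.exp (-t) * (Real.exp (-α ^ 2) / ((t + α ^ 2 + β) * Real.sqrt (t + α ^ 2))))
      (Set.Ioi 0) := by
  have hexp : IntegrableOn (fun t : ℝ => Real.exp (-t)) (Set.Ioi 0) := by
    have := exp_neg_integrableOn_Ioi 0 (one_pos)
    simpa using this
  apply Integrable.mono' (hexp.const_mul (Real.exp (-α ^ 2) / ((α ^ 2 + β) * α)))
  · apply ContinuousOn.aestronglyMeasurable _ measurableSet_Ioi
    apply ContinuousOn.mul (Continuous.continuousOn (by continuity))
    apply ContinuousOn.div continuousOn_const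
    · exact ContinuousOn.mul (by fun_prop)
        ((Real.continuous_sqrt.comp (by continuity)).continuousOn)
    · intro t ht
      have ht' : (0:ℝ) < t := ht
      have h1 : 0 < t + α ^ 2 := by positivity
      have : 0 < Real.sqrt (t + α ^ 2) := Real.sqrt_pos.mpr h1
      positivity
  · filter_upwards [ae_restrict_mem measurableSet_Ioi] with t ht
    have ht' : (0:ℝ) < t := ht
    have h1 : 0 < t + α ^ 2 := by positivity
    have hst : 0 < Real.sqrt (t + α ^ 2) := Real.sqrt_pos.mpr h1
    have hsa : α ≤ Real.sqrt (t + α ^ 2) := Real.le_sqrt_of_sq_le (by linarith)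
    rw [Real.norm_eq_abs, abs_of_nonneg (by positivity)]
    rw [show Real.exp (-α ^ 2) / ((α ^ 2 + β) * α) * Real.exp (-t)
      = Real.exp (-t) * (Real.exp (-α ^ 2) / ((α ^ 2 + β) * α)) by ring]
    have hden : (α ^ 2 + β) * α ≤ (t + α ^ 2 + β) * Real.sqrt (t + α ^ 2) :=
      mul_le_mul (by linarith) hsa hα.le (by linarith)
    gcongr
    all_goals first | positivity | linarith

lemma intH {c : ℝ} (hc : 0 < c) :
    IntegrableOn (fun w : ℝ => 2 * Real.exp (-w ^ 2) / (w ^ 2 + c)) (Set.Ioi 0) := by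
  have hexp : IntegrableOn (fun w : ℝ => Real.exp (-w ^ 2)) (Set.Ioi 0) := by
    have := (integrable_exp_neg_mul_sq one_pos).integrableOn (s := Set.Ioi 0)
    simpa using this
  apply Integrable.mono' (hexp.const_mul (2 / c))
  · exact (((continuous_const.mul cont_ens).div
      (by continuity) (fun w => by positivity)).aestronglyMeasurable).restrict
  · filter_upwards [ae_restrict_mem measurableSet_Ioi] with w _
    rw [Real.norm_eq_abs, abs_of_nonneg (by positivity)]
    rw [show (2:ℝ) / c * Real.exp (-w ^ 2) = 2 * Real.exp (-w ^ 2) / c by ring]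
    gcongr
    all_goals first | positivity | linarith [sq_nonneg w]


end Aux

theorem stmt_5 (a b : ℝ) (ha : 0 < a) (hb : 0 < b) :
    1 - erf a * erf b =
      (b / Real.pi) * Real.exp (-b ^ 2) *
          (∫ t in Set.Ioi (0:ℝ),
            Real.exp (-t) *
              (1 / ((t + b ^ 2) * Real.sqrt t) -
                Real.exp (-a ^ 2) / ((t + a ^ 2 + b ^ 2) * Real.sqrt (t + a ^ 2)))) +
        (a / Real.pi) * Real.exp (-a ^ 2) *
          (∫ t in (0:ℝ)..b ^ 2, Real.exp (-t) / ((t + a ^ 2) * Real.sqrt t)) := by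
  have hb2 : (0:ℝ) < b ^ 2 := by positivity
  have ha2 : (0:ℝ) < a ^ 2 := by positivity
  set fA : ℝ → ℝ := fun t => Real.exp (-t) * (1 / ((t + b ^ 2) * Real.sqrt t)) with hfA
  set fB : ℝ → ℝ := fun t =>
    Real.exp (-t) * (Real.exp (-a ^ 2) / ((t + a ^ 2 + b ^ 2) * Real.sqrt (t + a ^ 2))) with hfB
  set h : ℝ → ℝ := fun w => 2 * Real.exp (-w ^ 2) / (w ^ 2 + b ^ 2) with hh
  -- split the Ioi integral
  have hsplit1 : (∫ t in Set.Ioi (0:ℝ),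
      Real.exp (-t) * (1 / ((t + b ^ 2) * Real.sqrt t) -
        Real.exp (-a ^ 2) / ((t + a ^ 2 + b ^ 2) * Real.sqrt (t + a ^ 2))))
      = (∫ t in Set.Ioi (0:ℝ), fA t) - ∫ t in Set.Ioi (0:ℝ), fB t := by
    rw [← integral_sub (intA hb2) (intB ha hb2)]
    apply setIntegral_congr_fun measurableSet_Ioi
    intro t _
    simp only [hfA, hfB]
    ring
  -- JA
  have hJA : (∫ t in Set.Ioi (0:ℝ), fA t) = ∫ w in Set.Ioi (0:ℝ), h w := by
    have h0 : (∫ t in Set.Ioi ((0:ℝ) ^ 2), fA t) = ∫ w in Set.Ioi (0:ℝ), |2 * w| * fA (w ^ 2) :=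
      subst_sq_Ioi le_rfl fA
    rw [show ((0:ℝ) ^ 2) = 0 by norm_num] at h0
    rw [h0]
    apply setIntegral_congr_fun measurableSet_Ioi
    intro w hw
    have hw' : (0:ℝ) < w := hw
    have hsq : Real.sqrt (w ^ 2) = w := Real.sqrt_sq hw'.le
    simp only [hfA, hh, hsq, abs_of_pos (by linarith : (0:ℝ) < 2 * w)]
    field_simp
  -- JB
  have hJB : (∫ t in Set.Ioi (0:ℝ), fB t) = ∫ w in Set.Ioi a, h w := by
    have hshift : (∫ t in Set.Ioi (a ^ 2), fA t) = ∫ t in Set.Ioi (0:ℝ), fA (t + a ^ 2) :=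
      subst_shift ha2.le fA
    have hBA : ∀ t ∈ Set.Ioi (0:ℝ), fB t = fA (t + a ^ 2) := by
      intro t _
      simp only [hfA, hfB]
      rw [show -(t + a ^ 2) = -t + -a ^ 2 by ring, Real.exp_add]
      ring
    have h1 : (∫ t in Set.Ioi (0:ℝ), fB t) = ∫ t in Set.Ioi (a ^ 2), fA t := by
      rw [hshift]
      exact setIntegral_congr_fun measurableSet_Ioi hBA
    have h2 : (∫ t in Set.Ioi (a ^ 2), fA t) = ∫ w in Set.Ioi a, |2 * w| * fA (w ^ 2) :=
      subst_sq_Ioi ha.le fA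
    rw [h1, h2]
    apply setIntegral_congr_fun measurableSet_Ioi
    intro w hw
    have hw' : a < w := hw
    have hw0 : (0:ℝ) < w := lt_trans ha hw'
    have hsq : Real.sqrt (w ^ 2) = w := Real.sqrt_sq hw0.le
    simp only [hfA, hh, hsq, abs_of_pos (by linarith : (0:ℝ) < 2 * w)]
    field_simp
  -- difference = interval integral 0..a
  have hdiff : (∫ w in Set.Ioi (0:ℝ), h w) - (∫ w in Set.Ioi a, h w)
      = 2 * ∫ w in (0:ℝ)..a, Real.exp (-w ^ 2) / (b ^ 2 + w ^ 2) := by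
    have hint := intH hb2
    have hu : Set.Ioc 0 a ∪ Set.Ioi a = Set.Ioi (0:ℝ) := Set.Ioc_union_Ioi_eq_Ioi ha.le
    have : (∫ w in Set.Ioi (0:ℝ), h w)
        = (∫ w in Set.Ioc 0 a, h w) + ∫ w in Set.Ioi a, h w := by
      rw [← hu]
      exact setIntegral_union (Set.Ioc_disjoint_Ioi le_rfl) measurableSet_Ioi
        (hint.mono_set (by rw [← hu]; exact Set.subset_union_left))
        (hint.mono_set (by rw [← hu]; exact Set.subset_union_right))
    rw [this]
    have : (∫ w in Set.Ioc 0 a, h w) = ∫ w in (0:ℝ)..a, h w :=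
      (intervalIntegral.integral_of_le ha.le).symm
    rw [this, ← intervalIntegral.integral_const_mul]
    have : ∀ w ∈ Set.uIcc (0:ℝ) a, h w = 2 * (Real.exp (-w ^ 2) / (b ^ 2 + w ^ 2)) := by
      intro w _
      simp only [hh]
      rw [add_comm (w ^ 2) (b ^ 2)]
      ring
    rw [intervalIntegral.integral_congr this]
    ring
  -- second term
  have hT2 : (∫ t in (0:ℝ)..b ^ 2, Real.exp (-t) / ((t + a ^ 2) * Real.sqrt t))
      = 2 * ∫ w in (0:ℝ)..b, Real.exp (-w ^ 2) / (a ^ 2 + w ^ 2) := by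
    rw [intervalIntegral.integral_of_le hb2.le]
    rw [subst_sq_Ioc hb.le]
    have : ∀ w ∈ Set.Ioc (0:ℝ) b,
        |2 * w| * (Real.exp (-(w ^ 2)) / ((w ^ 2 + a ^ 2) * Real.sqrt (w ^ 2)))
          = 2 * (Real.exp (-w ^ 2) / (a ^ 2 + w ^ 2)) := by
      intro w hw
      have hw' : (0:ℝ) < w := hw.1
      have hsq : Real.sqrt (w ^ 2) = w := Real.sqrt_sq hw'.le
      rw [hsq, abs_of_pos (by linarith : (0:ℝ) < 2 * w)]
      field_simp
      ring
    rw [setIntegral_congr_fun measurableSet_Ioc this]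
    rw [← intervalIntegral.integral_of_le hb.le, intervalIntegral.integral_const_mul]
  -- erf product
  have hpi : Real.sqrt Real.pi ^ 2 = Real.pi := Real.sq_sqrt Real.pi_pos.le
  have hpin : Real.sqrt Real.pi ≠ 0 := by
    have := Real.sqrt_pos.mpr Real.pi_pos; linarith
  have herf : erf a * erf b = 4 / Real.pi * (E a * E b) := by
    have h0 : erf a * erf b = 4 / (Real.sqrt Real.pi ^ 2) * (E a * E b) := by
      simp only [erf, E]; ring
    rw [h0, hpi]
  -- W identity
  have hW := W_zero hb ha
  unfold W at hW
  have hpull : (∫ w in (0:ℝ)..a, b * Real.exp (-w ^ 2) / (b ^ 2 + w ^ 2))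
      = b * ∫ w in (0:ℝ)..a, Real.exp (-w ^ 2) / (b ^ 2 + w ^ 2) := by
    rw [← intervalIntegral.integral_const_mul]
    apply intervalIntegral.integral_congr
    intro w _
    simp only [mul_div_assoc]
  have hpull2 : Real.exp (-a ^ 2) * a * (∫ w in (0:ℝ)..b, Real.exp (-w ^ 2) / (a ^ 2 + w ^ 2))
      = Real.exp (-a ^ 2) * a * ∫ w in (0:ℝ)..b, Real.exp (-w ^ 2) / (a ^ 2 + w ^ 2) := rfl
  rw [hsplit1, hJA, hJB, hdiff, hT2, herf]
  rw [hpull] at hW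
  linear_combination hW
end

section
/- Let a be a real number with a > 0. Then 1 − (erf(a))² = (2a/π) * exp(-a²) * ∫_{0}^{a²} exp(-t) / ((t + a²) * √t) dt. -/
open MeasureTheory

open intervalIntegral Set in
/-- Auxiliary: `Gf x = ∫_0^1 exp(-(x²(1+s²)))/(1+s²) ds`. -/
noncomputable def Gf (x : ℝ) : ℝ := ∫ s in (0:ℝ)..1, Real.exp (-(x^2*(1+s^2))) / (1+s^2)

lemma contF (x : ℝ) : Continuous fun s : ℝ => Real.exp (-(x^2*(1+s^2))) / (1+s^2) :=
  (by continuity : Continuous fun s : ℝ => Real.exp (-(x^2*(1+s^2)))).div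
    (by continuity) (fun s => by positivity)

set_option maxHeartbeats 1000000 in
lemma Gf_hasDerivAt (a : ℝ) :
    HasDerivAt Gf (∫ s in (0:ℝ)..1, (-2*a) * Real.exp (-(a^2*(1+s^2)))) a := by
  have hmeas : ∀ᶠ x in nhds a, AEStronglyMeasurable
      (fun s => Real.exp (-(x^2*(1+s^2))) / (1+s^2)) (volume.restrict (Set.uIoc (0:ℝ) 1)) :=
    Filter.Eventually.of_forall fun x => (contF x).aestronglyMeasurable
  have hint : IntervalIntegrable (fun s => Real.exp (-(a^2*(1+s^2))) / (1+s^2))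
      volume (0:ℝ) 1 := (contF a).intervalIntegrable _ _
  have hmeas' : AEStronglyMeasurable
      (fun s => (-2*a) * Real.exp (-(a^2*(1+s^2)))) (volume.restrict (Set.uIoc (0:ℝ) 1)) := by
    apply Continuous.aestronglyMeasurable; continuity
  have hbint : IntervalIntegrable (fun _ : ℝ => 2*(|a|+1)) volume (0:ℝ) 1 :=
    intervalIntegrable_const
  have hbound : ∀ᵐ t ∂volume, t ∈ Set.uIoc (0:ℝ) 1 → ∀ x ∈ Metric.ball a 1,
      ‖(-2*x) * Real.exp (-(x^2*(1+t^2)))‖ ≤ 2*(|a|+1) := by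
    refine Filter.Eventually.of_forall fun t ht x hx => ?_
    have h1 : Real.exp (-(x^2*(1+t^2))) ≤ 1 := by
      apply Real.exp_le_one_iff.mpr
      nlinarith [sq_nonneg x, sq_nonneg t, sq_nonneg (x*t)]
    have h2 : |x| ≤ |a| + 1 := by
      have h3 : |x - a| < 1 := by
        have := mem_ball_iff_norm.mp hx
        rwa [Real.norm_eq_abs] at this
      have h4 := abs_sub_abs_le_abs_sub x a
      linarith
    rw [norm_mul, Real.norm_eq_abs, Real.norm_eq_abs, abs_of_pos (Real.exp_pos _)]
    calc |(-2*x)| * Real.exp (-(x^2*(1+t^2))) ≤ |(-2*x)| * 1 :=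
          mul_le_mul_of_nonneg_left h1 (abs_nonneg _)
      _ = 2 * |x| := by rw [mul_one, abs_mul]; simp
      _ ≤ 2*(|a|+1) := by linarith
  have hdiff : ∀ᵐ t ∂volume, t ∈ Set.uIoc (0:ℝ) 1 → ∀ x ∈ Metric.ball a 1,
      HasDerivAt (fun x => Real.exp (-(x^2*(1+t^2))) / (1+t^2))
        ((-2*x) * Real.exp (-(x^2*(1+t^2)))) x := by
    refine Filter.Eventually.of_forall fun t ht x hx => ?_
    have h1 : HasDerivAt (fun y : ℝ => -(y^2*(1+t^2))) (-(2*x*(1+t^2))) x := by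
      have := ((hasDerivAt_pow 2 x).mul_const (1+t^2)).neg
      exact this.congr_deriv (by norm_num)
    have h2 := (h1.exp).div_const (1+t^2)
    refine h2.congr_deriv ?_
    have ht2 : (1:ℝ)+t^2 ≠ 0 := by positivity
    field_simp
  have h := intervalIntegral.hasDerivAt_integral_of_dominated_loc_of_deriv_le
    (Metric.ball_mem_nhds a one_pos) hmeas hint hmeas' hbound hbint hdiff
  exact h.2

lemma erf_hasDerivAt (a : ℝ) :
    HasDerivAt erf (2 / Real.sqrt Real.pi * Real.exp (-a ^ 2)) a := by
  have hc : Continuous fun u : ℝ => Real.exp (-u ^ 2) := by continuity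
  have h : HasDerivAt (fun z => ∫ u in (0:ℝ)..z, Real.exp (-u ^ 2))
      (Real.exp (-a ^ 2)) a :=
    intervalIntegral.integral_hasDerivAt_right (hc.intervalIntegrable _ _)
      (hc.stronglyMeasurableAtFilter _ _) hc.continuousAt
  have he : erf = fun z => (2 / Real.sqrt Real.pi) * ∫ u in (0:ℝ)..z, Real.exp (-u ^ 2) := rfl
  rw [he]; convert h.const_mul (2 / Real.sqrt Real.pi) using 1

lemma scale_integral (a : ℝ) :
    a * ∫ s in (0:ℝ)..1, Real.exp (-(a^2*s^2)) = ∫ u in (0:ℝ)..a, Real.exp (-u^2) := by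
  rcases eq_or_ne a 0 with rfl | ha
  · simp
  · have h := intervalIntegral.integral_comp_mul_left (fun u : ℝ => Real.exp (-u^2))
      (a := 0) (b := 1) (c := a) ha
    simp only [mul_pow, mul_zero, mul_one, smul_eq_mul] at h
    have h2 : ∫ s in (0:ℝ)..1, Real.exp (-(a^2*s^2))
        = a⁻¹ * ∫ u in (0:ℝ)..a, Real.exp (-u^2) := by
      simpa [mul_pow] using h
    rw [h2]
    field_simp

lemma Gf_hasDerivAt' (a : ℝ) :
    HasDerivAt Gf (-2 * Real.exp (-a^2) * ∫ u in (0:ℝ)..a, Real.exp (-u^2)) a := by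
  have h := Gf_hasDerivAt a
  have e1 : (∫ s in (0:ℝ)..1, (-2*a) * Real.exp (-(a^2*(1+s^2))))
      = -2 * Real.exp (-a^2) * ∫ u in (0:ℝ)..a, Real.exp (-u^2) := by
    have e2 : ∀ s : ℝ, (-2*a) * Real.exp (-(a^2*(1+s^2)))
        = ((-2*a) * Real.exp (-a^2)) * Real.exp (-(a^2*s^2)) := by
      intro s
      have : Real.exp (-(a^2*(1+s^2))) = Real.exp (-a^2) * Real.exp (-(a^2*s^2)) := by
        rw [← Real.exp_add]; ring_nf
      rw [this]; ring
    simp only [e2]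
    rw [intervalIntegral.integral_const_mul, ← scale_integral a]
    ring
  rwa [e1] at h

lemma key (a : ℝ) : 1 - erf a ^ 2 = (4 / Real.pi) * Gf a := by
  set Φ : ℝ → ℝ := fun x => 1 - erf x ^ 2 - (4 / Real.pi) * Gf x with hΦ
  have hsq : Real.sqrt Real.pi * Real.sqrt Real.pi = Real.pi :=
    Real.mul_self_sqrt Real.pi_pos.le
  have hsne : Real.sqrt Real.pi ≠ 0 := by positivity
  have hpne : Real.pi ≠ 0 := Real.pi_ne_zero
  have hderiv : ∀ x, HasDerivAt Φ 0 x := by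
    intro x
    have h1 : HasDerivAt (fun y => 1 - erf y ^ 2)
        (-(2 * erf x ^ 1 * (2 / Real.sqrt Real.pi * Real.exp (-x ^ 2)))) x :=
      ((erf_hasDerivAt x).pow 2).const_sub 1
    have h2 := (Gf_hasDerivAt' x).const_mul (4 / Real.pi)
    have h3 := h1.sub h2
    refine h3.congr_deriv ?_
    simp only [erf]
    field_simp
    rw [Real.sq_sqrt Real.pi_pos.le]
    ring
  have hconst : Φ a = Φ 0 :=
    is_const_of_deriv_eq_zero (fun x => (hderiv x).differentiableAt)
      (fun x => (hderiv x).deriv) a 0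
  have hG0 : Gf 0 = Real.pi / 4 := by
    rw [Gf]
    simp only [ne_eq, OfNat.ofNat_ne_zero, not_false_eq_true, zero_pow, zero_mul, neg_zero,
      Real.exp_zero]
    have h : (∫ s in (0:ℝ)..1, 1 / (1+s^2)) = Real.arctan 1 - Real.arctan 0 :=
      integral_one_div_one_add_sq
    rw [h]
    simp [Real.arctan_one]
  have hΦ0 : Φ 0 = 0 := by
    simp only [hΦ, erf]
    rw [hG0]
    simp
  have hfin := hconst.trans hΦ0
  simp only [hΦ, sub_eq_zero] at hfin
  linarith [hfin]

open Set in
lemma subst_integral (a : ℝ) (ha : 0 < a) :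
    (∫ t in (0:ℝ)..a^2, Real.exp (-t) / ((t + a ^ 2) * Real.sqrt t))
      = (2/a) * ∫ s in (0:ℝ)..1, Real.exp (-(a^2*s^2)) / (1+s^2) := by
  set g : ℝ → ℝ := fun t => Real.exp (-t) / ((t + a ^ 2) * Real.sqrt t) with hg
  set f : ℝ → ℝ := fun s => a^2 * s^2 with hf
  have ha2 : (0:ℝ) < a^2 := by positivity
  have himg : f '' Ioo 0 1 = Ioo 0 (a^2) := by
    ext t
    constructor
    · rintro ⟨s, ⟨hs0, hs1⟩, rfl⟩
      constructor
      · positivity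
      · calc a^2 * s^2 < a^2 * 1 := by
              apply mul_lt_mul_of_pos_left _ ha2
              nlinarith
          _ = a^2 := mul_one _
    · rintro ⟨ht0, ht1⟩
      refine ⟨Real.sqrt (t / a^2), ⟨Real.sqrt_pos.mpr (by positivity), ?_⟩, ?_⟩
      · rw [show (1:ℝ) = Real.sqrt 1 by simp]
        apply Real.sqrt_lt_sqrt (by positivity)
        rw [div_lt_one ha2]; exact ht1
      · simp only [hf]
        rw [Real.sq_sqrt (by positivity : (0:ℝ) ≤ t / a^2)]
        field_simp
  have hderiv : ∀ x ∈ Ioo (0:ℝ) 1, HasDerivWithinAt f (a^2*(2*x)) (Ioo (0:ℝ) 1) x := by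
    intro x hx
    have h : HasDerivAt f (a^2*(2*x)) x := by
      have := (hasDerivAt_pow 2 x).const_mul (a^2)
      exact this.congr_deriv (by norm_num)
    exact h.hasDerivWithinAt
  have hinj : InjOn f (Ioo (0:ℝ) 1) := by
    intro x hx y hy hxy
    simp only [hf] at hxy
    have h1 : x^2 = y^2 := mul_left_cancel₀ (by positivity) hxy
    have h2 : Real.sqrt (x^2) = Real.sqrt (y^2) := by rw [h1]
    rwa [Real.sqrt_sq hx.1.le, Real.sqrt_sq hy.1.le] at h2
  have step := integral_image_eq_integral_abs_deriv_smul measurableSet_Ioo hderiv hinj g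
  rw [himg] at step
  have lhs_eq : (∫ t in (0:ℝ)..a^2, g t) = ∫ t in Ioo (0:ℝ) (a^2), g t := by
    rw [intervalIntegral.integral_of_le ha2.le, integral_Ioc_eq_integral_Ioo]
  have rhs_congr : (∫ x in Ioo (0:ℝ) 1, |a^2*(2*x)| • g (f x))
      = ∫ x in Ioo (0:ℝ) 1, (2/a) * (Real.exp (-(a^2*x^2)) / (1+x^2)) := by
    apply setIntegral_congr_fun measurableSet_Ioo
    intro x hx
    have hx0 := hx.1
    have hsqrt : Real.sqrt (a^2*x^2) = a * x := by
      rw [show a^2*x^2 = (a*x)^2 by ring, Real.sqrt_sq (by positivity)]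
    simp only [hf, hg, smul_eq_mul]
    rw [hsqrt, abs_of_pos (by positivity)]
    have h1 : (0:ℝ) < 1 + x^2 := by positivity
    field_simp
    ring
  rw [lhs_eq, step, rhs_congr, integral_const_mul]
  congr 1
  rw [intervalIntegral.integral_of_le (by norm_num : (0:ℝ) ≤ 1), integral_Ioc_eq_integral_Ioo]

theorem stmt_6 (a : ℝ) (ha : 0 < a) :
    1 - (erf a) ^ 2 =
      (2 * a / Real.pi) * Real.exp (-a ^ 2) *
        ∫ t in (0:ℝ)..a ^ 2, Real.exp (-t) / ((t + a ^ 2) * Real.sqrt t) := by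
  rw [key a, subst_integral a ha]
  have hGf : Gf a = Real.exp (-a^2) * ∫ s in (0:ℝ)..1, Real.exp (-(a^2*s^2)) / (1+s^2) := by
    rw [Gf, ← intervalIntegral.integral_const_mul]
    apply intervalIntegral.integral_congr
    intro s hs
    have h : Real.exp (-(a^2*(1+s^2))) = Real.exp (-a^2) * Real.exp (-(a^2*s^2)) := by
      rw [← Real.exp_add]; ring_nf
    simp only [h]
    ring
  rw [hGf]
  have hane : a ≠ 0 := ha.ne'
  have hpne : Real.pi ≠ 0 := Real.pi_ne_zero
  field_simp
  ring
end

section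
/- Let a be a real number with a > 0. Then 1 − (erf(a))² = (4/π) * exp(-a²) * ∫_{0}^{1} exp(-a² * s²) / (s² + 1) ds. -/
open MeasureTheory

/-- The Gaussian antiderivative. -/
noncomputable def erfAux (t : ℝ) : ℝ := ∫ u in (0:ℝ)..t, Real.exp (-u ^ 2)

lemma erfAux_inner (t : ℝ) :
    ∫ s in (0:ℝ)..1, 2 * t * Real.exp (-t ^ 2 * (1 + s ^ 2))
      = 2 * Real.exp (-t ^ 2) * erfAux t := by
  have h : ∀ s : ℝ, 2 * t * Real.exp (-t ^ 2 * (1 + s ^ 2))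
      = (2 * t * Real.exp (-t ^ 2)) * Real.exp (-(t * s) ^ 2) := by
    intro s
    have he : -t ^ 2 * (1 + s ^ 2) = -t ^ 2 + -(t * s) ^ 2 := by ring
    rw [he, Real.exp_add]
    ring
  simp_rw [h]
  rw [intervalIntegral.integral_const_mul]
  rcases eq_or_ne t 0 with rfl | ht
  · simp [erfAux]
  · have := intervalIntegral.integral_comp_mul_left (fun u => Real.exp (-u ^ 2)) ht
      (a := (0:ℝ)) (b := 1)
    simp only [mul_zero, mul_one, smul_eq_mul] at this
    rw [this]
    field_simp [erfAux]
    rfl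

lemma erfAux_sq (a : ℝ) (ha : 0 ≤ a) :
    erfAux a ^ 2 = ∫ t in (0:ℝ)..a, 2 * Real.exp (-t ^ 2) * erfAux t := by
  have hG : ∀ t : ℝ, HasDerivAt erfAux (Real.exp (-t ^ 2)) t := by
    intro t
    have hc : Continuous fun u : ℝ => Real.exp (-u ^ 2) := by fun_prop
    exact (hc.integral_hasStrictDerivAt 0 t).hasDerivAt
  have hderiv : ∀ t ∈ Set.uIcc (0:ℝ) a,
      HasDerivAt (fun t => erfAux t ^ 2) (2 * Real.exp (-t ^ 2) * erfAux t) t := by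
    intro t _
    have := (hG t).fun_pow 2
    simpa [mul_comm, mul_assoc, mul_left_comm] using this
  have hdiff : Differentiable ℝ erfAux := fun t => (hG t).differentiableAt
  have hcontG : Continuous erfAux := hdiff.continuous
  have hint : IntervalIntegrable (fun t => 2 * Real.exp (-t ^ 2) * erfAux t)
      volume 0 a := by
    apply Continuous.intervalIntegrable
    fun_prop
  have := intervalIntegral.integral_eq_sub_of_hasDerivAt hderiv hint
  rw [this]
  simp [erfAux]

lemma inner_t (a s : ℝ) :
    ∫ t in (0:ℝ)..a, 2 * t * Real.exp (-t ^ 2 * (1 + s ^ 2))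
      = (1 - Real.exp (-a ^ 2 * (1 + s ^ 2))) / (1 + s ^ 2) := by
  have hs : (0:ℝ) < 1 + s ^ 2 := by positivity
  have hderiv : ∀ t ∈ Set.uIcc (0:ℝ) a,
      HasDerivAt (fun t : ℝ => -Real.exp (-t ^ 2 * (1 + s ^ 2)) / (1 + s ^ 2))
        (2 * t * Real.exp (-t ^ 2 * (1 + s ^ 2))) t := by
    intro t _
    have h1 : HasDerivAt (fun t : ℝ => -t ^ 2 * (1 + s ^ 2)) (-(2 * t) * (1 + s ^ 2)) t := by
      have := ((hasDerivAt_pow 2 t).neg).mul_const (1 + s ^ 2)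
      simpa using this
    have h2 := (h1.exp).fun_neg.div_const (1 + s ^ 2)
    refine h2.congr_deriv ?_
    rw [div_eq_iff hs.ne']
    ring
  have hint : IntervalIntegrable (fun t => 2 * t * Real.exp (-t ^ 2 * (1 + s ^ 2)))
      volume 0 a := by
    apply Continuous.intervalIntegrable; fun_prop
  rw [intervalIntegral.integral_eq_sub_of_hasDerivAt hderiv hint]
  field_simp
  rw [zero_pow two_ne_zero, mul_zero, neg_zero, Real.exp_zero]
  ring

theorem stmt_7 (a : ℝ) (ha : 0 < a) :
    1 - (erf a) ^ 2 =
      (4 / Real.pi) * Real.exp (-a ^ 2) *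
        ∫ s in (0:ℝ)..1, Real.exp (-a ^ 2 * s ^ 2) / (s ^ 2 + 1) := by
  have hpi : (0:ℝ) < Real.pi := Real.pi_pos
  set I : ℝ := ∫ s in (0:ℝ)..1, Real.exp (-a ^ 2 * s ^ 2) / (s ^ 2 + 1) with hI
  -- Fubini: swap integrals of g t s = 2 t exp(-t²(1+s²)) over [0,a]×[0,1]
  have hswap :
      (∫ t in (0:ℝ)..a, ∫ s in (0:ℝ)..1, 2 * t * Real.exp (-t ^ 2 * (1 + s ^ 2)))
        = ∫ s in (0:ℝ)..1, ∫ t in (0:ℝ)..a, 2 * t * Real.exp (-t ^ 2 * (1 + s ^ 2)) := by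
    have h01 : (0:ℝ) ≤ 1 := zero_le_one
    have hcont : Continuous (Function.uncurry
        fun t s : ℝ => 2 * t * Real.exp (-t ^ 2 * (1 + s ^ 2))) := by
      apply Continuous.mul (by fun_prop)
      exact Real.continuous_exp.comp (by fun_prop)
    have hintg : Integrable (Function.uncurry
        fun t s : ℝ => 2 * t * Real.exp (-t ^ 2 * (1 + s ^ 2)))
        ((volume.restrict (Set.Ioc (0:ℝ) a)).prod (volume.restrict (Set.Ioc (0:ℝ) 1))) := by
      rw [Measure.prod_restrict]
      have hK : IsCompact (Set.Icc (0:ℝ) a ×ˢ Set.Icc (0:ℝ) 1) :=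
        isCompact_Icc.prod isCompact_Icc
      have : IntegrableOn (Function.uncurry
          fun t s : ℝ => 2 * t * Real.exp (-t ^ 2 * (1 + s ^ 2)))
          (Set.Icc (0:ℝ) a ×ˢ Set.Icc (0:ℝ) 1) (volume.prod volume) := by
        rw [← Measure.volume_eq_prod]
        exact hcont.continuousOn.integrableOn_compact hK
      exact this.mono_set (Set.prod_mono Set.Ioc_subset_Icc_self Set.Ioc_subset_Icc_self)
    simp only [intervalIntegral.integral_of_le ha.le, intervalIntegral.integral_of_le h01]
    exact integral_integral_swap hintg
  -- compute both sides of hswap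
  have hlhs : (∫ t in (0:ℝ)..a, ∫ s in (0:ℝ)..1, 2 * t * Real.exp (-t ^ 2 * (1 + s ^ 2)))
      = erfAux a ^ 2 := by
    rw [erfAux_sq a ha.le]
    congr 1
    ext t
    exact erfAux_inner t
  have hrhs : (∫ s in (0:ℝ)..1, ∫ t in (0:ℝ)..a, 2 * t * Real.exp (-t ^ 2 * (1 + s ^ 2)))
      = Real.pi / 4 - Real.exp (-a ^ 2) * I := by
    have h1 : ∀ s : ℝ, (∫ t in (0:ℝ)..a, 2 * t * Real.exp (-t ^ 2 * (1 + s ^ 2)))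
        = 1 / (1 + s ^ 2) - Real.exp (-a ^ 2) * (Real.exp (-a ^ 2 * s ^ 2) / (s ^ 2 + 1)) := by
      intro s
      rw [inner_t a s]
      have : Real.exp (-a ^ 2 * (1 + s ^ 2)) = Real.exp (-a ^ 2) * Real.exp (-a ^ 2 * s ^ 2) := by
        rw [← Real.exp_add]; ring_nf
      rw [this]
      have hs : (0:ℝ) < 1 + s ^ 2 := by positivity
      field_simp
      ring
    simp_rw [h1]
    rw [intervalIntegral.integral_sub, intervalIntegral.integral_const_mul,
      integral_one_div_one_add_sq]
    · rw [hI]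
      have : ∀ x : ℝ, Real.exp (-a ^ 2 * x ^ 2) = Real.exp (-(a ^ 2 * x ^ 2)) := by
        intro x; rw [neg_mul]
      simp_rw [this]
      rw [Real.arctan_one, Real.arctan_zero]
      ring
    · apply Continuous.intervalIntegrable
      have : Continuous fun s : ℝ => 1 + s ^ 2 := by fun_prop
      exact continuous_const.div this (fun s => by positivity)
    · apply Continuous.intervalIntegrable
      apply Continuous.mul continuous_const
      have h2 : Continuous fun s : ℝ => s ^ 2 + 1 := by fun_prop
      exact ((Real.continuous_exp.comp (by fun_prop)).div h2 (fun s => by positivity))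
  have key : erfAux a ^ 2 = Real.pi / 4 - Real.exp (-a ^ 2) * I := by
    rw [← hlhs, hswap, hrhs]
  have herf : erf a ^ 2 = (4 / Real.pi) * erfAux a ^ 2 := by
    rw [erf, mul_pow, div_pow, Real.sq_sqrt hpi.le]
    norm_num [erfAux]
  rw [herf, key]
  field_simp
  ring
end
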